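/- arXiv:2109.00689 — 3 statements merged into one kernel-verified Lean document; each statement's English description precedes it below -/
import Mathlib

section
/- Let (g,J) be a Lie algebra with complex structure and φ ∈ Λ^{0,1}⊗g^{1,0}. Then the (0,1)-part of the Lie derivative satisfies L_φ^{0,1} = -i_{∂̄φ} as operators on Λ•g*_ℂ, where L_φ^{0,1} = i_φ ∂̄ - ∂̄ i_φ. -/
/-- Chevalley-Eilenberg differential on `k`-cochains (with trivial coefficients). -/
noncomputable def ceD {R L : Type*} [Ring R] [LieRing L] {k : ℕ}
    (f : (Fin k → L) → R) : (Fin (k + 1) → L) → R := fun x =>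
  ∑ j : Fin (k + 1), ∑ i : Fin (k + 1),
    if (i : ℕ) < (j : ℕ) then
      (-1 : R) ^ ((i : ℕ) + (j : ℕ)) *
        f (fun m =>
          if (m : ℕ) = 0 then ⁅x i, x j⁆
          else
            x ⟨min (if (m : ℕ) - 1 < (i : ℕ) then (m : ℕ) - 1
                    else if (m : ℕ) < (j : ℕ) then (m : ℕ) else (m : ℕ) + 1) k,
               Nat.lt_succ_of_le (Nat.min_le_right _ _)⟩)
    else 0

/-- Contraction `i_K` of a cochain with a vector-valued 1-form `K ∈ g*⊗g` (as an
endomorphism): `(i_K f)(x₁,…,x_k) = ∑_j f(x₁,…,K x_j,…,x_k)`. -/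
noncomputable def iIns {R L : Type*} [Ring R] [LieRing L] {k : ℕ}
    (K : L → L) (f : (Fin k → L) → R) : (Fin k → L) → R := fun x =>
  ∑ j : Fin k, f (Function.update x j (K (x j)))

/-- Contraction `i_Φ` of a cochain with a vector-valued 2-form `Φ`:
`(i_Φ f)(x₀,…,x_k) = ∑_{i<j} (-1)^{i+j+1} f(Φ(x_i,x_j), x₀,…,x̂_i,…,x̂_j,…,x_k)`. -/
noncomputable def iIns2 {R L : Type*} [Ring R] [LieRing L] {k : ℕ}
    (Φ : L → L → L) (f : (Fin k → L) → R) : (Fin (k + 1) → L) → R := fun x =>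
  ∑ j : Fin (k + 1), ∑ i : Fin (k + 1),
    if (i : ℕ) < (j : ℕ) then
      (-1 : R) ^ ((i : ℕ) + (j : ℕ) + 1) *
        f (fun m =>
          if (m : ℕ) = 0 then Φ (x i) (x j)
          else
            x ⟨min (if (m : ℕ) - 1 < (i : ℕ) then (m : ℕ) - 1
                    else if (m : ℕ) < (j : ℕ) then (m : ℕ) else (m : ℕ) + 1) k,
               Nat.lt_succ_of_le (Nat.min_le_right _ _)⟩)
    else 0

/-- The projection of a `k`-cochain onto its component of bidegree `(p, k-p)` with respect
to the decomposition `g_ℂ = g^{1,0} ⊕ g^{0,1}` given by the projections `prP, prQ`. -/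
noncomputable def bigradeP {R L : Type*} [Ring R] [LieRing L] {k : ℕ}
    (prP prQ : L → L) (p : ℕ) (f : (Fin k → L) → R) : (Fin k → L) → R := fun x =>
  ∑ S ∈ Finset.powersetCard p (Finset.univ : Finset (Fin k)),
    f (fun i => if i ∈ S then prP (x i) else prQ (x i))

/-- The operator `∂` (the `(1,0)`-part of the Chevalley-Eilenberg differential). -/
noncomputable def delOp {R L : Type*} [Ring R] [LieRing L] {k : ℕ}
    (prP prQ : L → L) (f : (Fin k → L) → R) : (Fin (k + 1) → L) → R := fun x =>
  ∑ p ∈ Finset.range (k + 1),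
    bigradeP prP prQ (p + 1) (ceD (bigradeP prP prQ p f)) x

/-- The operator `∂̄` (the `(0,1)`-part of the Chevalley-Eilenberg differential). -/
noncomputable def dbarOp {R L : Type*} [Ring R] [LieRing L] {k : ℕ}
    (prP prQ : L → L) (f : (Fin k → L) → R) : (Fin (k + 1) → L) → R := fun x =>
  ∑ p ∈ Finset.range (k + 1),
    bigradeP prP prQ p (ceD (bigradeP prP prQ p f)) x


open Finset

/-- index reparametrisation: position `m ≥ 1` ↦ original index, skipping `i < j` -/
def sigF {k : ℕ} (i j : Fin (k + 1)) (m : Fin k) : Fin (k + 1) :=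
  ⟨min (if (m : ℕ) - 1 < (i : ℕ) then (m : ℕ) - 1
        else if (m : ℕ) < (j : ℕ) then (m : ℕ) else (m : ℕ) + 1) k,
   Nat.lt_succ_of_le (Nat.min_le_right _ _)⟩

def tauv {k : ℕ} (i j l : Fin (k + 1)) : ℕ :=
  if (l : ℕ) < (i : ℕ) then (l : ℕ) + 1 else if (l : ℕ) < (j : ℕ) then (l : ℕ) else (l : ℕ) - 1

section
variable {k : ℕ} {i j : Fin (k + 1)} (hij : (i : ℕ) < (j : ℕ))
include hij

lemma sigF_ne_i {m : Fin k} (hm : (m : ℕ) ≠ 0) : sigF i j m ≠ i := by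
  have h1 := m.isLt; have h2 := j.isLt
  simp only [Ne, Fin.ext_iff, sigF]
  split_ifs <;> omega

lemma sigF_ne_j {m : Fin k} (hm : (m : ℕ) ≠ 0) : sigF i j m ≠ j := by
  have h1 := m.isLt; have h2 := j.isLt
  simp only [Ne, Fin.ext_iff, sigF]
  split_ifs <;> omega

lemma sigF_inj {m m' : Fin k} (hm : (m : ℕ) ≠ 0) (hm' : (m' : ℕ) ≠ 0)
    (h : sigF i j m = sigF i j m') : m = m' := by
  have h1 := m.isLt; have h2 := j.isLt; have h3 := m'.isLt
  simp only [Fin.ext_iff, sigF] at h ⊢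
  split_ifs at h <;> omega

lemma tauv_lt {l : Fin (k + 1)} (hli : l ≠ i) (hlj : l ≠ j) : tauv i j l < k := by
  have h1 := l.isLt; have h2 := j.isLt
  have h3 : (l : ℕ) ≠ (i : ℕ) := fun h => hli (Fin.ext h)
  have h4 : (l : ℕ) ≠ (j : ℕ) := fun h => hlj (Fin.ext h)
  simp only [tauv]; split_ifs <;> omega

lemma tauv_ne_zero {l : Fin (k + 1)} (hli : l ≠ i) (hlj : l ≠ j) : tauv i j l ≠ 0 := by
  have h3 : (l : ℕ) ≠ (i : ℕ) := fun h => hli (Fin.ext h)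
  have h4 : (l : ℕ) ≠ (j : ℕ) := fun h => hlj (Fin.ext h)
  simp only [tauv]; split_ifs <;> omega

lemma sigF_tauv {l : Fin (k + 1)} (hli : l ≠ i) (hlj : l ≠ j) :
    sigF i j (⟨tauv i j l, tauv_lt hij hli hlj⟩ : Fin k) = l := by
  have h1 := l.isLt; have h2 := j.isLt
  have h3 : (l : ℕ) ≠ (i : ℕ) := fun h => hli (Fin.ext h)
  have h4 : (l : ℕ) ≠ (j : ℕ) := fun h => hlj (Fin.ext h)
  simp only [Fin.ext_iff, sigF, tauv]
  split_ifs <;> omega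

lemma tauv_sigF {m : Fin k} (hm : (m : ℕ) ≠ 0) : tauv i j (sigF i j m) = (m : ℕ) := by
  have h1 := m.isLt; have h2 := j.isLt
  simp only [sigF, tauv]
  split_ifs <;> omega

lemma sigF_surj {l : Fin (k + 1)} (hli : l ≠ i) (hlj : l ≠ j) :
    ∃ m : Fin k, (m : ℕ) ≠ 0 ∧ sigF i j m = l :=
  ⟨⟨tauv i j l, tauv_lt hij hli hlj⟩, tauv_ne_zero hij hli hlj, sigF_tauv hij hli hlj⟩

end

noncomputable def ceDW {L : Type*} [LieRing L] {k : ℕ} (W : L → L → L)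
    (f : (Fin k → L) → ℂ) : (Fin (k + 1) → L) → ℂ := fun x =>
  ∑ j : Fin (k + 1), ∑ i : Fin (k + 1),
    if (i : ℕ) < (j : ℕ) then
      (-1 : ℂ) ^ ((i : ℕ) + (j : ℕ)) *
        f (fun m => if (m : ℕ) = 0 then W (x i) (x j) else x (sigF i j m))
    else 0


open Finset in
lemma recon {L : Type*} [AddCommGroup L] {k : ℕ} (P Q : L → L)
    (hproj : ∀ a, P a + Q a = a) {i j : Fin (k + 1)} (hij : (i : ℕ) < (j : ℕ))
    (f : (Fin k → L) → ℂ)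
    (hadd : ∀ (x : Fin k → L) (m : Fin k) (a b : L),
      f (Function.update x m (a + b)) = f (Function.update x m a) + f (Function.update x m b))
    (u : Finset (Fin (k + 1))) :
    ∀ (_ : ∀ l ∈ u, l ≠ i ∧ l ≠ j) (z : Fin k → L),
      ∑ T ∈ u.powerset,
        f (fun m => if (m : ℕ) ≠ 0 ∧ sigF i j m ∈ T then P (z m)
            else if (m : ℕ) ≠ 0 ∧ sigF i j m ∈ u then Q (z m) else z m) = f z := by
  classical
  induction u using Finset.induction_on with
  | empty => intro _ z; simp
  | @insert a s ha ih =>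
    intro hu z
    obtain ⟨hai, haj⟩ := hu a (mem_insert_self a s)
    obtain ⟨ma, hma0, hmaσ⟩ := sigF_surj hij hai haj
    have huniq : ∀ m : Fin k, (m : ℕ) ≠ 0 → sigF i j m = a → m = ma := fun m hm h =>
      sigF_inj hij hm hma0 (h.trans hmaσ.symm)
    have hus : ∀ l ∈ s, l ≠ i ∧ l ≠ j := fun l hl => hu l (mem_insert_of_mem hl)
    rw [Finset.sum_powerset_insert ha]
    have e1 : ∀ T ∈ s.powerset,
        f (fun m => if (m : ℕ) ≠ 0 ∧ sigF i j m ∈ T then P (z m)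
            else if (m : ℕ) ≠ 0 ∧ sigF i j m ∈ insert a s then Q (z m) else z m)
        = f (fun m => if (m : ℕ) ≠ 0 ∧ sigF i j m ∈ T then P (Function.update z ma (Q (z ma)) m)
            else if (m : ℕ) ≠ 0 ∧ sigF i j m ∈ s then Q (Function.update z ma (Q (z ma)) m)
            else Function.update z ma (Q (z ma)) m) := by
      intro T hT
      have haT : a ∉ T := fun h => ha (mem_powerset.mp hT h)
      congr 1; funext m
      by_cases hm : (m : ℕ) = 0
      · have hmma : m ≠ ma := fun h => hma0 (h ▸ hm)
        simp [hm, Function.update_of_ne hmma]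
      · by_cases hmma : m = ma
        · subst hmma
          simp [hm, hmaσ, haT, ha, Function.update_self]
        · have hσ : sigF i j m ≠ a := fun h => hmma (huniq m hm h)
          rw [Function.update_of_ne hmma]
          simp [hm, mem_insert, hσ]
    have e2 : ∀ T ∈ s.powerset,
        f (fun m => if (m : ℕ) ≠ 0 ∧ sigF i j m ∈ insert a T then P (z m)
            else if (m : ℕ) ≠ 0 ∧ sigF i j m ∈ insert a s then Q (z m) else z m)
        = f (fun m => if (m : ℕ) ≠ 0 ∧ sigF i j m ∈ T then P (Function.update z ma (P (z ma)) m)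
            else if (m : ℕ) ≠ 0 ∧ sigF i j m ∈ s then Q (Function.update z ma (P (z ma)) m)
            else Function.update z ma (P (z ma)) m) := by
      intro T hT
      have haT : a ∉ T := fun h => ha (mem_powerset.mp hT h)
      congr 1; funext m
      by_cases hm : (m : ℕ) = 0
      · have hmma : m ≠ ma := fun h => hma0 (h ▸ hm)
        simp [hm, Function.update_of_ne hmma]
      · by_cases hmma : m = ma
        · subst hmma
          simp [hm, hmaσ, haT, ha, Function.update_self, mem_insert]
        · have hσ : sigF i j m ≠ a := fun h => hmma (huniq m hm h)
          rw [Function.update_of_ne hmma]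
          simp [hm, mem_insert, hσ]
    rw [Finset.sum_congr rfl e1, Finset.sum_congr rfl e2, ih hus, ih hus]
    rw [← hadd, add_comm (Q (z ma)) (P (z ma)), hproj, Function.update_eq_self]

/-- the set of slots `m ≠ 0` whose image under `sigF` lies in `T` -/
def MTs {k : ℕ} (i j : Fin (k + 1)) (T : Finset (Fin (k + 1))) : Finset (Fin k) :=
  Finset.univ.filter (fun m => (m : ℕ) ≠ 0 ∧ sigF i j m ∈ T)

/-- the `π_T`-twisted bracket-insertion tuple -/
def argsT {L : Type*} [LieRing L] (P Q : L → L) {k : ℕ} (i j : Fin (k + 1))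
    (T : Finset (Fin (k + 1))) (x : Fin (k + 1) → L) : Fin k → L := fun m =>
  if (m : ℕ) = 0 then
    ⁅if i ∈ T then P (x i) else Q (x i), if j ∈ T then P (x j) else Q (x j)⁆
  else if sigF i j m ∈ T then P (x (sigF i j m)) else Q (x (sigF i j m))

open Finset

lemma mem_MTs {k : ℕ} {i j : Fin (k + 1)} {T : Finset (Fin (k + 1))} {m : Fin k} :
    m ∈ MTs i j T ↔ (m : ℕ) ≠ 0 ∧ sigF i j m ∈ T := by simp [MTs]

lemma m₀_notMem_MTs {k : ℕ} (hk : 0 < k) {i j : Fin (k + 1)} {T : Finset (Fin (k + 1))} :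
    (⟨0, hk⟩ : Fin k) ∉ MTs i j T := by simp [MTs]

lemma MTs_insert {k : ℕ} {i j : Fin (k + 1)} (hij : (i : ℕ) < (j : ℕ))
    (T : Finset (Fin (k + 1))) {l : Fin (k + 1)} (hl : l = i ∨ l = j) :
    MTs i j (insert l T) = MTs i j T := by
  ext m
  simp only [mem_MTs, mem_insert]
  constructor
  · rintro ⟨hm, h | h⟩
    · exfalso; rcases hl with rfl | rfl
      · exact sigF_ne_i hij hm h
      · exact sigF_ne_j hij hm h
    · exact ⟨hm, h⟩
  · rintro ⟨hm, h⟩; exact ⟨hm, Or.inr h⟩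

/-- value of the inner `S`-sum -/
noncomputable def Gval {L : Type*} [LieRing L] (P Q : L → L) {k : ℕ} (f : (Fin k → L) → ℂ)
    (m₀ : Fin k) (i j : Fin (k + 1)) (x : Fin (k + 1) → L) (T : Finset (Fin (k + 1))) : ℂ :=
  (if (MTs i j T).card = T.card then
      f (fun m => if m ∈ MTs i j T then P (argsT P Q i j T x m) else Q (argsT P Q i j T x m))
    else 0)
  + (if (MTs i j T).card + 1 = T.card then
      f (fun m => if m ∈ insert m₀ (MTs i j T) then P (argsT P Q i j T x m)
          else Q (argsT P Q i j T x m))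
    else 0)

/-- inner sum over `S` collapses -/
lemma innerS {L : Type*} [LieRing L] (P Q : L → L)
    (hPQ : ∀ a, P (Q a) = 0) (hQP : ∀ a, Q (P a) = 0)
    {k : ℕ} (f : (Fin k → L) → ℂ)
    (h0 : ∀ (x : Fin k → L) (m : Fin k), x m = 0 → f x = 0)
    {i j : Fin (k + 1)} (hij : (i : ℕ) < (j : ℕ)) (hk : 0 < k)
    (x : Fin (k + 1) → L) (T : Finset (Fin (k + 1))) :
    ∑ S ∈ powersetCard T.card (univ : Finset (Fin k)),
      f (fun m => if m ∈ S then P (argsT P Q i j T x m) else Q (argsT P Q i j T x m))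
    = Gval P Q f (⟨0, hk⟩ : Fin k) i j x T := by
  classical
  unfold Gval
  set m₀ : Fin k := ⟨0, hk⟩ with hm₀def
  set M : Finset (Fin k) := MTs i j T with hMdef
  have hm₀ : m₀ ∉ M := m₀_notMem_MTs hk
  have hMne : M ≠ insert m₀ M := fun h => hm₀ (h ▸ mem_insert_self m₀ M)
  have step : ∀ S ∈ powersetCard T.card (univ : Finset (Fin k)),
      f (fun m => if m ∈ S then P (argsT P Q i j T x m) else Q (argsT P Q i j T x m))
      = (if S = M then
          f (fun m => if m ∈ S then P (argsT P Q i j T x m) else Q (argsT P Q i j T x m)) else 0)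
        + (if S = insert m₀ M then
          f (fun m => if m ∈ S then P (argsT P Q i j T x m) else Q (argsT P Q i j T x m)) else 0) := by
    intro S _
    by_cases h1 : S = M
    · rw [if_pos h1, if_neg (h1 ▸ hMne), add_zero]
    by_cases h2 : S = insert m₀ M
    · rw [if_pos h2, if_neg h1, zero_add]
    · rw [if_neg h1, if_neg h2, add_zero]
      -- find a mismatch slot
      have hmm : ¬ ∀ m : Fin k, (m : ℕ) ≠ 0 → (m ∈ S ↔ sigF i j m ∈ T) := by
        intro hall
        have hSE : S.erase m₀ = M := by
          ext m
          simp only [mem_erase, hMdef, mem_MTs]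
          constructor
          · rintro ⟨hne, hmS⟩
            have hm0 : (m : ℕ) ≠ 0 := fun h => hne (Fin.ext h)
            exact ⟨hm0, (hall m hm0).mp hmS⟩
          · rintro ⟨hm0, hσ⟩
            exact ⟨fun h => hm0 (by rw [h]), (hall m hm0).mpr hσ⟩
        by_cases h0' : m₀ ∈ S
        · exact h2 (by rw [← hSE, Finset.insert_erase h0'])
        · exact h1 (by rw [← hSE, Finset.erase_eq_of_notMem h0'])
      push_neg at hmm
      obtain ⟨m, hm0, hmiff⟩ := hmm
      apply h0 _ m
      rcases hmiff with ⟨hmS, hσT⟩ | ⟨hmS, hσT⟩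
      · rw [if_pos hmS]
        rw [show argsT P Q i j T x m = Q (x (sigF i j m)) by
          simp [argsT, hm0, hσT]]
        exact hPQ _
      · rw [if_neg hmS]
        rw [show argsT P Q i j T x m = P (x (sigF i j m)) by
          simp [argsT, hm0, hσT]]
        exact hQP _
  rw [Finset.sum_congr rfl step, Finset.sum_add_distrib,
    Finset.sum_ite_eq' _ M, Finset.sum_ite_eq' _ (insert m₀ M)]
  simp only [Finset.mem_powersetCard_univ, Finset.card_insert_of_notMem hm₀]
lemma MTs_card {k : ℕ} {i j : Fin (k + 1)} (hij : (i : ℕ) < (j : ℕ))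
    {T : Finset (Fin (k + 1))} (hT : ∀ l ∈ T, l ≠ i ∧ l ≠ j) :
    (MTs i j T).card = T.card := by
  refine Finset.card_bij' (fun m _ => sigF i j m)
    (fun l hl => (⟨tauv i j l, tauv_lt hij (hT l hl).1 (hT l hl).2⟩ : Fin k))
    ?_ ?_ ?_ ?_
  · intro m hm; exact (mem_MTs.mp hm).2
  · intro l hl
    refine mem_MTs.mpr ⟨tauv_ne_zero hij (hT l hl).1 (hT l hl).2, ?_⟩
    rw [sigF_tauv hij (hT l hl).1 (hT l hl).2]; exact hl
  · intro m hm
    obtain ⟨hm0, _⟩ := mem_MTs.mp hm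
    exact Fin.ext (tauv_sigF hij hm0)
  · intro l hl
    exact sigF_tauv hij (hT l hl).1 (hT l hl).2

section GvalEval
variable {L : Type*} [LieRing L] (P Q : L → L)
variable {k : ℕ} (f : (Fin k → L) → ℂ)
variable {i j : Fin (k + 1)} (x : Fin (k + 1) → L)

lemma Gval_self (hPP : ∀ a, P (P a) = P a) (hQQ : ∀ a, Q (Q a) = Q a)
    (hij : (i : ℕ) < (j : ℕ)) (hk : 0 < k)
    {T' : Finset (Fin (k + 1))} (hiT' : i ∉ T') (hjT' : j ∉ T')
    (hcard : (MTs i j T').card = T'.card) :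
    Gval P Q f (⟨0, hk⟩ : Fin k) i j x T'
      = f (fun m => if (m : ℕ) = 0 then Q ⁅Q (x i), Q (x j)⁆
          else if sigF i j m ∈ T' then P (x (sigF i j m)) else Q (x (sigF i j m))) := by
  unfold Gval
  rw [if_pos hcard, if_neg (by omega), add_zero]
  congr 1; funext m
  by_cases hm : (m : ℕ) = 0
  · have hmM : m ∉ MTs i j T' := by simp [mem_MTs, hm]
    rw [if_neg hmM, if_pos hm,
      show argsT P Q i j T' x m = ⁅Q (x i), Q (x j)⁆ by simp [argsT, hm, hiT', hjT']]
  · rw [if_neg hm]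
    have hargs : argsT P Q i j T' x m
        = if sigF i j m ∈ T' then P (x (sigF i j m)) else Q (x (sigF i j m)) := by
      simp [argsT, hm]
    by_cases hσ : sigF i j m ∈ T'
    · rw [if_pos (mem_MTs.mpr ⟨hm, hσ⟩), hargs, if_pos hσ]
      exact hPP _
    · rw [if_neg (fun hc => hσ (mem_MTs.mp hc).2), hargs, if_neg hσ]
      exact hQQ _

lemma Gval_insert_j (hPP : ∀ a, P (P a) = P a) (hQQ : ∀ a, Q (Q a) = Q a)
    (hij : (i : ℕ) < (j : ℕ)) (hk : 0 < k)
    {T' : Finset (Fin (k + 1))} (hiT' : i ∉ T') (hjT' : j ∉ T')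
    (hcard : (MTs i j T').card = T'.card) :
    Gval P Q f (⟨0, hk⟩ : Fin k) i j x (insert j T')
      = f (fun m => if (m : ℕ) = 0 then P ⁅Q (x i), P (x j)⁆
          else if sigF i j m ∈ T' then P (x (sigF i j m)) else Q (x (sigF i j m))) := by
  have hij' : i ≠ j := fun h => absurd (congrArg Fin.val h) (Nat.ne_of_lt hij)
  unfold Gval
  rw [MTs_insert hij T' (Or.inr rfl), Finset.card_insert_of_notMem hjT']
  rw [if_neg (by omega), if_pos (by omega), zero_add]
  congr 1; funext m
  by_cases hm : (m : ℕ) = 0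
  · have hmm₀ : m = (⟨0, hk⟩ : Fin k) := Fin.ext hm
    rw [if_pos (hmm₀ ▸ Finset.mem_insert_self _ _), if_pos hm,
      show argsT P Q i j (insert j T') x m = ⁅Q (x i), P (x j)⁆ by
        simp [argsT, hm, Finset.mem_insert, hij', hiT']]
  · rw [if_neg hm]
    have hmm₀ : m ≠ (⟨0, hk⟩ : Fin k) := fun h => hm (congrArg Fin.val h)
    have hmem : m ∈ insert (⟨0, hk⟩ : Fin k) (MTs i j T') ↔ m ∈ MTs i j T' := by
      simp [Finset.mem_insert, hmm₀]
    have hσj : sigF i j m ≠ j := sigF_ne_j hij hm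
    have hargs : argsT P Q i j (insert j T') x m
        = if sigF i j m ∈ T' then P (x (sigF i j m)) else Q (x (sigF i j m)) := by
      simp [argsT, hm, Finset.mem_insert, hσj]
    by_cases hσ : sigF i j m ∈ T'
    · rw [if_pos (hmem.mpr (mem_MTs.mpr ⟨hm, hσ⟩)), hargs, if_pos hσ]
      exact hPP _
    · rw [if_neg (fun hc => hσ (mem_MTs.mp (hmem.mp hc)).2), hargs, if_neg hσ]
      exact hQQ _

lemma Gval_insert_i (hPP : ∀ a, P (P a) = P a) (hQQ : ∀ a, Q (Q a) = Q a)
    (hij : (i : ℕ) < (j : ℕ)) (hk : 0 < k)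
    {T' : Finset (Fin (k + 1))} (hiT' : i ∉ T') (hjT' : j ∉ T')
    (hcard : (MTs i j T').card = T'.card) :
    Gval P Q f (⟨0, hk⟩ : Fin k) i j x (insert i T')
      = f (fun m => if (m : ℕ) = 0 then P ⁅P (x i), Q (x j)⁆
          else if sigF i j m ∈ T' then P (x (sigF i j m)) else Q (x (sigF i j m))) := by
  have hij' : i ≠ j := fun h => absurd (congrArg Fin.val h) (Nat.ne_of_lt hij)
  unfold Gval
  rw [MTs_insert hij T' (Or.inl rfl), Finset.card_insert_of_notMem hiT']
  rw [if_neg (by omega), if_pos (by omega), zero_add]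
  congr 1; funext m
  by_cases hm : (m : ℕ) = 0
  · have hmm₀ : m = (⟨0, hk⟩ : Fin k) := Fin.ext hm
    rw [if_pos (hmm₀ ▸ Finset.mem_insert_self _ _), if_pos hm,
      show argsT P Q i j (insert i T') x m = ⁅P (x i), Q (x j)⁆ by
        simp [argsT, hm, Finset.mem_insert, Ne.symm hij', hjT']]
  · rw [if_neg hm]
    have hmm₀ : m ≠ (⟨0, hk⟩ : Fin k) := fun h => hm (congrArg Fin.val h)
    have hmem : m ∈ insert (⟨0, hk⟩ : Fin k) (MTs i j T') ↔ m ∈ MTs i j T' := by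
      simp [Finset.mem_insert, hmm₀]
    have hσi : sigF i j m ≠ i := sigF_ne_i hij hm
    have hargs : argsT P Q i j (insert i T') x m
        = if sigF i j m ∈ T' then P (x (sigF i j m)) else Q (x (sigF i j m)) := by
      simp [argsT, hm, Finset.mem_insert, hσi]
    by_cases hσ : sigF i j m ∈ T'
    · rw [if_pos (hmem.mpr (mem_MTs.mpr ⟨hm, hσ⟩)), hargs, if_pos hσ]
      exact hPP _
    · rw [if_neg (fun hc => hσ (mem_MTs.mp (hmem.mp hc)).2), hargs, if_neg hσ]
      exact hQQ _

lemma Gval_insert_ij (hij : (i : ℕ) < (j : ℕ)) (hk : 0 < k)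
    {T' : Finset (Fin (k + 1))} (hiT' : i ∉ T') (hjT' : j ∉ T')
    (hcard : (MTs i j T').card = T'.card) :
    Gval P Q f (⟨0, hk⟩ : Fin k) i j x (insert i (insert j T')) = 0 := by
  have hij' : i ≠ j := fun h => absurd (congrArg Fin.val h) (Nat.ne_of_lt hij)
  have hi2 : i ∉ insert j T' := by simp [Finset.mem_insert, hij', hiT']
  unfold Gval
  rw [MTs_insert hij (insert j T') (Or.inl rfl), MTs_insert hij T' (Or.inr rfl),
    Finset.card_insert_of_notMem hi2, Finset.card_insert_of_notMem hjT']
  rw [if_neg (by omega), if_neg (by omega), add_zero]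

end GvalEval

lemma fadd0 {L : Type*} [AddCommGroup L] {k : ℕ} (hk : 0 < k) (f : (Fin k → L) → ℂ)
    (hadd : ∀ (x : Fin k → L) (m : Fin k) (a b : L),
      f (Function.update x m (a + b)) = f (Function.update x m a) + f (Function.update x m b))
    (t : Fin k → L) (a b : L) :
    f (fun m => if (m : ℕ) = 0 then a else t m) + f (fun m => if (m : ℕ) = 0 then b else t m)
      = f (fun m => if (m : ℕ) = 0 then a + b else t m) := by
  have key : ∀ c : L, (fun (m : Fin k) => if (m : ℕ) = 0 then c else t m)
      = Function.update (fun (m : Fin k) => if (m : ℕ) = 0 then a else t m) (⟨0, hk⟩ : Fin k) c := by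
    intro c; funext m
    by_cases hm : m = (⟨0, hk⟩ : Fin k)
    · subst hm; simp
    · have hm' : (m : ℕ) ≠ 0 := fun h => hm (Fin.ext h)
      rw [Function.update_of_ne hm, if_neg hm', if_neg hm']
  rw [key a, key b, key (a + b), hadd]

lemma core {L : Type*} [LieRing L] (P Q : L → L)
    (hproj : ∀ a, P a + Q a = a) (hPP : ∀ a, P (P a) = P a) (hQQ : ∀ a, Q (Q a) = Q a)
    (hPQ : ∀ a, P (Q a) = 0) (hQP : ∀ a, Q (P a) = 0)
    {k : ℕ} (f : (Fin k → L) → ℂ)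
    (h0 : ∀ (x : Fin k → L) (m : Fin k), x m = 0 → f x = 0)
    (hadd : ∀ (x : Fin k → L) (m : Fin k) (a b : L),
      f (Function.update x m (a + b)) = f (Function.update x m a) + f (Function.update x m b))
    {i j : Fin (k + 1)} (hij : (i : ℕ) < (j : ℕ)) (x : Fin (k + 1) → L) :
    ∑ T ∈ (univ : Finset (Fin (k + 1))).powerset,
      ∑ S ∈ powersetCard T.card (univ : Finset (Fin k)),
        f (fun m => if m ∈ S then P (argsT P Q i j T x m) else Q (argsT P Q i j T x m))
    = f (fun m => if (m : ℕ) = 0 then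
          P ⁅P (x i), Q (x j)⁆ + P ⁅Q (x i), P (x j)⁆ + Q ⁅Q (x i), Q (x j)⁆
        else x (sigF i j m)) := by
  classical
  have hjk : (j : ℕ) ≤ k := Nat.lt_succ_iff.mp j.isLt
  have hk : 0 < k := by omega
  have hij' : i ≠ j := fun h => absurd (congrArg Fin.val h) (Nat.ne_of_lt hij)
  set u : Finset (Fin (k + 1)) := (univ.erase i).erase j with hu
  have hiu : i ∉ u := by simp [hu]
  have hju : j ∉ u := by simp [hu]
  have hiu' : i ∉ insert j u := by simp [hu, hij']
  have huelts : ∀ l ∈ u, l ≠ i ∧ l ≠ j := by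
    intro l hl
    simp only [hu, Finset.mem_erase] at hl
    exact ⟨hl.2.1, hl.1⟩
  have huniv : (univ : Finset (Fin (k + 1))) = insert i (insert j u) := by
    ext l
    simp only [Finset.mem_insert, hu, Finset.mem_erase, Finset.mem_univ, and_true, iff_true]
    tauto
  rw [Finset.sum_congr rfl (fun T _ => innerS P Q hPQ hQP f h0 hij hk x T)]
  rw [huniv, Finset.sum_powerset_insert hiu', Finset.sum_powerset_insert hju,
    Finset.sum_powerset_insert hju]
  rw [← Finset.sum_add_distrib, ← Finset.sum_add_distrib, ← Finset.sum_add_distrib]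
  have main : ∀ T' ∈ u.powerset,
      Gval P Q f (⟨0, hk⟩ : Fin k) i j x T' + Gval P Q f (⟨0, hk⟩ : Fin k) i j x (insert j T')
      + (Gval P Q f (⟨0, hk⟩ : Fin k) i j x (insert i T')
        + Gval P Q f (⟨0, hk⟩ : Fin k) i j x (insert i (insert j T')))
      = f (fun (m : Fin k) =>
          if (m : ℕ) ≠ 0 ∧ sigF i j m ∈ T' then
            P (if (m : ℕ) = 0 then
                P ⁅P (x i), Q (x j)⁆ + P ⁅Q (x i), P (x j)⁆ + Q ⁅Q (x i), Q (x j)⁆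
              else x (sigF i j m))
          else if (m : ℕ) ≠ 0 ∧ sigF i j m ∈ u then
            Q (if (m : ℕ) = 0 then
                P ⁅P (x i), Q (x j)⁆ + P ⁅Q (x i), P (x j)⁆ + Q ⁅Q (x i), Q (x j)⁆
              else x (sigF i j m))
          else if (m : ℕ) = 0 then
                P ⁅P (x i), Q (x j)⁆ + P ⁅Q (x i), P (x j)⁆ + Q ⁅Q (x i), Q (x j)⁆
              else x (sigF i j m)) := by
    intro T' hT'
    have hsubu : T' ⊆ u := Finset.mem_powerset.mp hT'
    have hsub : ∀ l ∈ T', l ≠ i ∧ l ≠ j := fun l hl => huelts l (hsubu hl)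
    have hiT' : i ∉ T' := fun h => hiu (hsubu h)
    have hjT' : j ∉ T' := fun h => hju (hsubu h)
    have hcard : (MTs i j T').card = T'.card := MTs_card hij hsub
    rw [Gval_self P Q f x hPP hQQ hij hk hiT' hjT' hcard,
      Gval_insert_j P Q f x hPP hQQ hij hk hiT' hjT' hcard,
      Gval_insert_i P Q f x hPP hQQ hij hk hiT' hjT' hcard,
      Gval_insert_ij P Q f x hij hk hiT' hjT' hcard, add_zero]
    rw [fadd0 hk f hadd, fadd0 hk f hadd]
    rw [show Q ⁅Q (x i), Q (x j)⁆ + P ⁅Q (x i), P (x j)⁆ + P ⁅P (x i), Q (x j)⁆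
        = P ⁅P (x i), Q (x j)⁆ + P ⁅Q (x i), P (x j)⁆ + Q ⁅Q (x i), Q (x j)⁆ by abel]
    congr 1; funext m
    by_cases hm : (m : ℕ) = 0
    · rw [if_pos hm, if_neg (fun hc => hc.1 hm), if_neg (fun hc => hc.1 hm), if_pos hm]
    · have hmu : sigF i j m ∈ u := by
        simp only [hu, Finset.mem_erase, Finset.mem_univ, and_true]
        exact ⟨sigF_ne_j hij hm, sigF_ne_i hij hm⟩
      rw [if_neg hm]
      by_cases hσ : sigF i j m ∈ T'
      · rw [if_pos hσ, if_pos (show (m : ℕ) ≠ 0 ∧ sigF i j m ∈ T' from ⟨hm, hσ⟩), if_neg hm]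
      · rw [if_neg hσ,
          if_neg (show ¬((m : ℕ) ≠ 0 ∧ sigF i j m ∈ T') from fun hc => hσ hc.2),
          if_pos (show (m : ℕ) ≠ 0 ∧ sigF i j m ∈ u from ⟨hm, hmu⟩), if_neg hm]
  rw [Finset.sum_congr rfl main]
  exact recon P Q hproj hij f hadd u huelts _

lemma dbar_eq {L : Type*} [LieRing L] (P Q : L → L)
    (hproj : ∀ a, P a + Q a = a) (hPP : ∀ a, P (P a) = P a) (hQQ : ∀ a, Q (Q a) = Q a)
    (hPQ : ∀ a, P (Q a) = 0) (hQP : ∀ a, Q (P a) = 0)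
    {k : ℕ} (f : (Fin k → L) → ℂ)
    (h0 : ∀ (x : Fin k → L) (m : Fin k), x m = 0 → f x = 0)
    (hadd : ∀ (x : Fin k → L) (m : Fin k) (a b : L),
      f (Function.update x m (a + b)) = f (Function.update x m a) + f (Function.update x m b))
    (x : Fin (k + 1) → L) :
    dbarOp P Q f x = ceDW (fun u v => P ⁅P u, Q v⁆ + P ⁅Q u, P v⁆ + Q ⁅Q u, Q v⁆) f x := by
  classical
  have hzero : ∑ T ∈ powersetCard (k + 1) (univ : Finset (Fin (k + 1))),
      ceD (bigradeP P Q (k + 1) f) (fun l => if l ∈ T then P (x l) else Q (x l)) = 0 := by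
    have hb : bigradeP P Q (k + 1) f = fun _ => (0 : ℂ) := by
      funext z
      unfold bigradeP
      rw [show powersetCard (k + 1) (univ : Finset (Fin k)) = ∅ from
        Finset.powersetCard_eq_empty.mpr (by simp)]
      simp
    apply Finset.sum_eq_zero; intro T _
    rw [hb]; unfold ceD; simp
  have step1 : ∑ T ∈ (univ : Finset (Fin (k + 1))).powerset,
      ceD (bigradeP P Q T.card f) (fun l => if l ∈ T then P (x l) else Q (x l))
      = dbarOp P Q f x := by
    rw [Finset.sum_powerset]
    rw [show ((univ : Finset (Fin (k + 1))).card) = k + 1 from by simp]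
    trans ∑ p ∈ Finset.range (k + 1 + 1), ∑ T ∈ powersetCard p (univ : Finset (Fin (k + 1))),
        ceD (bigradeP P Q p f) (fun l => if l ∈ T then P (x l) else Q (x l))
    · apply Finset.sum_congr rfl; intro p _
      apply Finset.sum_congr rfl; intro T hT
      rw [(Finset.mem_powersetCard.mp hT).2]
    · rw [Finset.sum_range_succ, hzero, add_zero]
      rfl
  rw [← step1]
  trans ∑ T ∈ (univ : Finset (Fin (k + 1))).powerset, ∑ j' : Fin (k + 1), ∑ i' : Fin (k + 1),
      if (i' : ℕ) < (j' : ℕ) then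
        (-1 : ℂ) ^ ((i' : ℕ) + (j' : ℕ)) *
          ∑ S ∈ powersetCard T.card (univ : Finset (Fin k)),
            f (fun m => if m ∈ S then P (argsT P Q i' j' T x m) else Q (argsT P Q i' j' T x m))
      else 0
  · apply Finset.sum_congr rfl; intro T _; rfl
  trans ∑ j' : Fin (k + 1), ∑ i' : Fin (k + 1), ∑ T ∈ (univ : Finset (Fin (k + 1))).powerset,
      if (i' : ℕ) < (j' : ℕ) then
        (-1 : ℂ) ^ ((i' : ℕ) + (j' : ℕ)) *
          ∑ S ∈ powersetCard T.card (univ : Finset (Fin k)),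
            f (fun m => if m ∈ S then P (argsT P Q i' j' T x m) else Q (argsT P Q i' j' T x m))
      else 0
  · rw [Finset.sum_comm]
    apply Finset.sum_congr rfl; intro j' _
    exact Finset.sum_comm
  apply Finset.sum_congr rfl; intro j' _
  apply Finset.sum_congr rfl; intro i' _
  by_cases h : (i' : ℕ) < (j' : ℕ)
  · rw [if_pos h]
    rw [show (∑ T ∈ (univ : Finset (Fin (k + 1))).powerset,
        if (i' : ℕ) < (j' : ℕ) then
          (-1 : ℂ) ^ ((i' : ℕ) + (j' : ℕ)) *
            ∑ S ∈ powersetCard T.card (univ : Finset (Fin k)),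
              f (fun m => if m ∈ S then P (argsT P Q i' j' T x m) else Q (argsT P Q i' j' T x m))
        else 0)
        = (-1 : ℂ) ^ ((i' : ℕ) + (j' : ℕ)) *
            ∑ T ∈ (univ : Finset (Fin (k + 1))).powerset,
              ∑ S ∈ powersetCard T.card (univ : Finset (Fin k)),
                f (fun m => if m ∈ S then P (argsT P Q i' j' T x m) else Q (argsT P Q i' j' T x m))
        from by
      rw [Finset.mul_sum]
      apply Finset.sum_congr rfl; intro T _
      rw [if_pos h]]
    rw [core P Q hproj hPP hQQ hPQ hQP f h0 hadd h x]
  · rw [if_neg h]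
    apply Finset.sum_eq_zero; intro T _
    rw [if_neg h]

lemma fsub0 {L : Type*} [AddCommGroup L] {k : ℕ} (hk : 0 < k) (f : (Fin k → L) → ℂ)
    (hadd : ∀ (x : Fin k → L) (m : Fin k) (a b : L),
      f (Function.update x m (a + b)) = f (Function.update x m a) + f (Function.update x m b))
    (t : Fin k → L) (a b : L) :
    f (fun m => if (m : ℕ) = 0 then a else t m) - f (fun m => if (m : ℕ) = 0 then b else t m)
      = f (fun m => if (m : ℕ) = 0 then a - b else t m) := by
  have h := fadd0 hk f hadd t (a - b) b
  rw [sub_add_cancel] at h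
  rw [← h]; ring

lemma phiComm {L : Type*} [LieRing L] (φ : L → L) (W : L → L → L)
    {k : ℕ} (f : (Fin k → L) → ℂ)
    (hadd : ∀ (x : Fin k → L) (m : Fin k) (a b : L),
      f (Function.update x m (a + b)) = f (Function.update x m a) + f (Function.update x m b))
    (x : Fin (k + 1) → L) :
    iIns φ (ceDW W f) x - ceDW W (iIns φ f) x
      = ceDW (fun u v => W (φ u) v + W u (φ v) - φ (W u v)) f x := by
  classical
  calc iIns φ (ceDW W f) x - ceDW W (iIns φ f) x
      = (∑ j' : Fin (k + 1), ∑ i' : Fin (k + 1), ∑ l : Fin (k + 1),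
          if (i' : ℕ) < (j' : ℕ) then
            (-1 : ℂ) ^ ((i' : ℕ) + (j' : ℕ)) *
              f (fun (m : Fin k) => if (m : ℕ) = 0 then
                  W (Function.update x l (φ (x l)) i') (Function.update x l (φ (x l)) j')
                else Function.update x l (φ (x l)) (sigF i' j' m))
          else 0)
        - (∑ j' : Fin (k + 1), ∑ i' : Fin (k + 1),
          if (i' : ℕ) < (j' : ℕ) then
            (-1 : ℂ) ^ ((i' : ℕ) + (j' : ℕ)) *
              ∑ m' : Fin k,
                f (Function.update
                    (fun (m : Fin k) => if (m : ℕ) = 0 then W (x i') (x j') else x (sigF i' j' m)) m'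
                    (φ (if ((m' : ℕ) = 0) then W (x i') (x j') else x (sigF i' j' m'))))
          else 0) := by
        congr 1
        trans ∑ l : Fin (k + 1), ∑ j' : Fin (k + 1), ∑ i' : Fin (k + 1),
            if (i' : ℕ) < (j' : ℕ) then
              (-1 : ℂ) ^ ((i' : ℕ) + (j' : ℕ)) *
                f (fun (m : Fin k) => if (m : ℕ) = 0 then
                    W (Function.update x l (φ (x l)) i') (Function.update x l (φ (x l)) j')
                  else Function.update x l (φ (x l)) (sigF i' j' m))
            else 0
        · apply Finset.sum_congr rfl; intro l _; rfl
        · rw [Finset.sum_comm]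
          apply Finset.sum_congr rfl; intro j' _
          exact Finset.sum_comm
    _ = ∑ j' : Fin (k + 1), ∑ i' : Fin (k + 1),
        ((∑ l : Fin (k + 1),
          if (i' : ℕ) < (j' : ℕ) then
            (-1 : ℂ) ^ ((i' : ℕ) + (j' : ℕ)) *
              f (fun (m : Fin k) => if (m : ℕ) = 0 then
                  W (Function.update x l (φ (x l)) i') (Function.update x l (φ (x l)) j')
                else Function.update x l (φ (x l)) (sigF i' j' m))
          else 0)
        - (if (i' : ℕ) < (j' : ℕ) then
            (-1 : ℂ) ^ ((i' : ℕ) + (j' : ℕ)) *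
              ∑ m' : Fin k,
                f (Function.update
                    (fun (m : Fin k) => if (m : ℕ) = 0 then W (x i') (x j') else x (sigF i' j' m)) m'
                    (φ (if ((m' : ℕ) = 0) then W (x i') (x j') else x (sigF i' j' m'))))
          else 0)) := by
        rw [← Finset.sum_sub_distrib]
        apply Finset.sum_congr rfl; intro j' _
        rw [← Finset.sum_sub_distrib]
    _ = ceDW (fun u v => W (φ u) v + W u (φ v) - φ (W u v)) f x := by
        apply Finset.sum_congr rfl; intro j' _
        apply Finset.sum_congr rfl; intro i' _
        by_cases h : (i' : ℕ) < (j' : ℕ)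
        swap
        · simp [h]
        rw [if_pos h, if_pos h, Finset.sum_congr rfl (fun l _ => if_pos h),
          ← Finset.mul_sum, ← mul_sub]
        congr 1
        have hjk : (j' : ℕ) ≤ k := Nat.lt_succ_iff.mp j'.isLt
        have hk : 0 < k := by omega
        have hij' : i' ≠ j' := fun hh => absurd (congrArg Fin.val hh) (Nat.ne_of_lt h)
        set u : Finset (Fin (k + 1)) := (univ.erase i').erase j' with hu
        have hju : j' ∉ u := by simp [hu]
        have hiu' : i' ∉ insert j' u := by simp [hu, hij']
        have huelts : ∀ l ∈ u, l ≠ i' ∧ l ≠ j' := by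
          intro l hl; simp only [hu, Finset.mem_erase] at hl; exact ⟨hl.2.1, hl.1⟩
        have huniv : (univ : Finset (Fin (k + 1))) = insert i' (insert j' u) := by
          ext l
          simp only [Finset.mem_insert, hu, Finset.mem_erase, Finset.mem_univ,
            and_true, iff_true]
          tauto
        set Astar : Fin k → L :=
          (fun (m : Fin k) => if (m : ℕ) = 0 then W (x i') (x j') else x (sigF i' j' m))
          with hA
        set m₀ : Fin k := ⟨0, hk⟩ with hm₀
        -- split the l-sum
        rw [show (univ : Finset (Fin (k + 1))) = insert i' (insert j' u) from huniv,
          Finset.sum_insert hiu', Finset.sum_insert hju]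
        -- split the m'-sum
        rw [show (univ : Finset (Fin k)) = insert m₀ (univ.erase m₀) from
            (Finset.insert_erase (Finset.mem_univ m₀)).symm,
          Finset.sum_insert (Finset.notMem_erase m₀ univ)]
        -- identify the two residual sums
        have hbij : ∑ l ∈ u,
            f (fun (m : Fin k) => if (m : ℕ) = 0 then
                W (Function.update x l (φ (x l)) i') (Function.update x l (φ (x l)) j')
              else Function.update x l (φ (x l)) (sigF i' j' m))
            = ∑ m' ∈ univ.erase m₀,
              f (Function.update Astar m'
                (φ (if ((m' : ℕ) = 0) then W (x i') (x j') else x (sigF i' j' m')))) := by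
          refine Finset.sum_bij'
            (fun l hl => (⟨tauv i' j' l,
              tauv_lt h (huelts l hl).1 (huelts l hl).2⟩ : Fin k))
            (fun m' hm' => sigF i' j' m') ?_ ?_ ?_ ?_ ?_
          · intro l hl
            refine Finset.mem_erase.mpr ⟨?_, Finset.mem_univ _⟩
            intro hc
            exact tauv_ne_zero h (huelts l hl).1 (huelts l hl).2 (congrArg Fin.val hc)
          · intro m' hm'
            have hm'0 : (m' : ℕ) ≠ 0 := fun hc =>
              (Finset.mem_erase.mp hm').1 (Fin.ext hc)
            simp only [hu, Finset.mem_erase, Finset.mem_univ, and_true]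
            exact ⟨sigF_ne_j h hm'0, sigF_ne_i h hm'0⟩
          · intro l hl
            exact sigF_tauv h (huelts l hl).1 (huelts l hl).2
          · intro m' hm'
            have hm'0 : (m' : ℕ) ≠ 0 := fun hc =>
              (Finset.mem_erase.mp hm').1 (Fin.ext hc)
            exact Fin.ext (tauv_sigF h hm'0)
          · intro l hl
            obtain ⟨hl1, hl2⟩ := huelts l hl
            congr 1
            funext m
            by_cases hm : m = (⟨tauv i' j' l, tauv_lt h hl1 hl2⟩ : Fin k)
            · subst hm
              rw [Function.update_self,
                if_neg (show ¬((⟨tauv i' j' l, tauv_lt h hl1 hl2⟩ : Fin k) : ℕ) = 0 from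
                  tauv_ne_zero h hl1 hl2),
                if_neg (show ¬((⟨tauv i' j' l, tauv_lt h hl1 hl2⟩ : Fin k) : ℕ) = 0 from
                  tauv_ne_zero h hl1 hl2),
                sigF_tauv h hl1 hl2, Function.update_self]
            · rw [Function.update_of_ne hm]
              show _ = if (m : ℕ) = 0 then W (x i') (x j') else x (sigF i' j' m)
              by_cases hm0 : (m : ℕ) = 0
              · rw [if_pos hm0, if_pos hm0, Function.update_of_ne (Ne.symm hl1),
                  Function.update_of_ne (Ne.symm hl2)]
              · rw [if_neg hm0, if_neg hm0]
                have hσl : sigF i' j' m ≠ l := by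
                  intro hc
                  apply hm
                  apply Fin.ext
                  rw [← tauv_sigF h hm0, hc]
                rw [Function.update_of_ne hσl]
        rw [hbij]
        -- evaluate the three distinguished terms
        have e_i : (fun (m : Fin k) => if (m : ℕ) = 0 then
              W (Function.update x i' (φ (x i')) i') (Function.update x i' (φ (x i')) j')
            else Function.update x i' (φ (x i')) (sigF i' j' m))
            = fun (m : Fin k) => if (m : ℕ) = 0 then W (φ (x i')) (x j')
                else x (sigF i' j' m) := by
          funext m
          by_cases hm0 : (m : ℕ) = 0
          · rw [if_pos hm0, if_pos hm0, Function.update_self,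
              Function.update_of_ne (Ne.symm hij')]
          · rw [if_neg hm0, if_neg hm0, Function.update_of_ne (sigF_ne_i h hm0)]
        have e_j : (fun (m : Fin k) => if (m : ℕ) = 0 then
              W (Function.update x j' (φ (x j')) i') (Function.update x j' (φ (x j')) j')
            else Function.update x j' (φ (x j')) (sigF i' j' m))
            = fun (m : Fin k) => if (m : ℕ) = 0 then W (x i') (φ (x j'))
                else x (sigF i' j' m) := by
          funext m
          by_cases hm0 : (m : ℕ) = 0
          · rw [if_pos hm0, if_pos hm0, Function.update_self,
              Function.update_of_ne hij']
          · rw [if_neg hm0, if_neg hm0, Function.update_of_ne (sigF_ne_j h hm0)]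
        have e_0 : Function.update Astar m₀
              (φ (if ((m₀ : ℕ) = 0) then W (x i') (x j') else x (sigF i' j' m₀)))
            = fun (m : Fin k) => if (m : ℕ) = 0 then φ (W (x i') (x j'))
                else x (sigF i' j' m) := by
          funext m
          by_cases hm : m = m₀
          · subst hm
            rw [Function.update_self, if_pos (show ((m₀ : Fin k) : ℕ) = 0 from rfl),
              if_pos (show ((m₀ : Fin k) : ℕ) = 0 from rfl)]
          · have hm0 : (m : ℕ) ≠ 0 := fun hc => hm (Fin.ext hc)
            rw [Function.update_of_ne hm]
            show (if (m : ℕ) = 0 then W (x i') (x j') else x (sigF i' j' m)) = _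
            rw [if_neg hm0, if_neg hm0]
        rw [e_i, e_j, e_0]
        rw [show ∀ (A B C R : ℂ), A + (B + R) - (C + R) = A + B - C from by intros; ring]
        rw [fadd0 hk f hadd, fsub0 hk f hadd]



lemma iIns_h0 {L : Type*} [LieRing L] (φ : L → L) (hφ0 : φ 0 = 0)
    {k : ℕ} (f : (Fin k → L) → ℂ)
    (h0 : ∀ (x : Fin k → L) (m : Fin k), x m = 0 → f x = 0) :
    ∀ (x : Fin k → L) (m : Fin k), x m = 0 → iIns φ f x = 0 := by
  intro x m hm
  apply Finset.sum_eq_zero; intro l _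
  by_cases hlm : l = m
  · subst hlm
    exact h0 _ l (by rw [Function.update_self, hm, hφ0])
  · exact h0 _ m (by rw [Function.update_of_ne (Ne.symm hlm)]; exact hm)

lemma iIns_hadd {L : Type*} [LieRing L] (φ : L → L)
    (hφadd : ∀ a b, φ (a + b) = φ a + φ b)
    {k : ℕ} (f : (Fin k → L) → ℂ)
    (hadd : ∀ (x : Fin k → L) (m : Fin k) (a b : L),
      f (Function.update x m (a + b)) = f (Function.update x m a) + f (Function.update x m b)) :
    ∀ (x : Fin k → L) (m : Fin k) (a b : L),
      iIns φ f (Function.update x m (a + b))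
        = iIns φ f (Function.update x m a) + iIns φ f (Function.update x m b) := by
  intro x m a b
  show (∑ l : Fin k, _) = (∑ l : Fin k, _) + (∑ l : Fin k, _)
  rw [← Finset.sum_add_distrib]
  apply Finset.sum_congr rfl; intro l _
  by_cases hlm : l = m
  · subst hlm
    rw [Function.update_self, Function.update_self, Function.update_self,
      Function.update_idem, Function.update_idem, Function.update_idem, hφadd, hadd]
  · have hml : m ≠ l := Ne.symm hlm
    rw [Function.update_of_ne hlm, Function.update_of_ne hlm, Function.update_of_ne hlm,
      Function.update_comm hml, Function.update_comm hml, Function.update_comm hml, hadd]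

lemma iIns2_neg {L : Type*} [LieRing L] (Φ : L → L → L) {k : ℕ}
    (f : (Fin k → L) → ℂ) (x : Fin (k + 1) → L) :
    -(iIns2 Φ f x) = ceDW Φ f x := by
  unfold iIns2 ceDW
  rw [← Finset.sum_neg_distrib]
  apply Finset.sum_congr rfl; intro j' _
  rw [← Finset.sum_neg_distrib]
  apply Finset.sum_congr rfl; intro i' _
  by_cases h : (i' : ℕ) < (j' : ℕ)
  · rw [if_pos h, if_pos h]
    show -((-1 : ℂ) ^ ((i' : ℕ) + (j' : ℕ) + 1)
        * f (fun m => if (m : ℕ) = 0 then Φ (x i') (x j') else x (sigF i' j' m)))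
      = (-1 : ℂ) ^ ((i' : ℕ) + (j' : ℕ))
        * f (fun m => if (m : ℕ) = 0 then Φ (x i') (x j') else x (sigF i' j' m))
    rw [pow_succ]
    ring
  · rw [if_neg h, if_neg h, neg_zero]

lemma NeqPhi {L : Type*} [LieRing L] [LieAlgebra ℂ L] (prP prQ φ : L →ₗ[ℂ] L)
    (hproj : ∀ x, prP x + prQ x = x)
    (hφ : ∀ x, prQ (φ x) = 0 ∧ φ (prP x) = 0) (u v : L) :
    (prP ⁅prP (φ u), prQ v⁆ + prP ⁅prQ (φ u), prP v⁆ + prQ ⁅prQ (φ u), prQ v⁆)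
      + (prP ⁅prP u, prQ (φ v)⁆ + prP ⁅prQ u, prP (φ v)⁆ + prQ ⁅prQ u, prQ (φ v)⁆)
      - φ (prP ⁅prP u, prQ v⁆ + prP ⁅prQ u, prP v⁆ + prQ ⁅prQ u, prQ v⁆)
    = prP ⁅prQ u, φ (prQ v)⁆ - prP ⁅prQ v, φ (prQ u)⁆ - φ ⁅prQ u, prQ v⁆ := by
  have hPφ : ∀ w, prP (φ w) = φ w := fun w => by
    have h := hproj (φ w); rw [(hφ w).1, add_zero] at h; exact h
  have hφQ : ∀ w, φ (prQ w) = φ w := fun w => by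
    conv_rhs => rw [← hproj w]
    rw [map_add, (hφ w).2, zero_add]
  rw [hPφ u, hPφ v, (hφ u).1, (hφ v).1]
  simp only [zero_lie, lie_zero, map_zero, add_zero, zero_add]
  rw [map_add, map_add, (hφ _).2, (hφ _).2, zero_add, zero_add]
  have h1 : prP ⁅φ u, prQ v⁆ = -prP ⁅prQ v, φ (prQ u)⁆ := by
    rw [← lie_skew, map_neg, hφQ u]
  have h2 : prP ⁅prQ u, φ v⁆ = prP ⁅prQ u, φ (prQ v)⁆ := by rw [hφQ v]
  rw [h1, h2, hφQ ⁅prQ u, prQ v⁆]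
  abel

/-- for a Lie algebra with (integrable) complex structure, encoded by the
projections `prP, prQ` onto `g^{1,0}` and `g^{0,1}` inside `g_ℂ = L`, and for
`φ ∈ Λ^{0,1}⊗g^{1,0}` (a linear map with values in `g^{1,0}` vanishing on `g^{1,0}`), one
has `L_φ^{0,1} = i_φ∂̄ - ∂̄i_φ = -i_{∂̄φ}` on all of `Λ^• g*_ℂ`. -/
theorem lie01_eq_neg_contraction_dbarPhi
    (L : Type*) [LieRing L] [LieAlgebra ℂ L] [FiniteDimensional ℂ L]
    (prP prQ φ : L →ₗ[ℂ] L)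
    (hproj : ∀ x, prP x + prQ x = x)
    (hPP : ∀ x, prP (prP x) = prP x) (hQQ : ∀ x, prQ (prQ x) = prQ x)
    (hPQ : ∀ x, prP (prQ x) = 0) (hQP : ∀ x, prQ (prP x) = 0)
    (hintP : ∀ x y : L, prQ ⁅prP x, prP y⁆ = 0)
    (hintQ : ∀ x y : L, prP ⁅prQ x, prQ y⁆ = 0)
    (hφ : ∀ x, prQ (φ x) = 0 ∧ φ (prP x) = 0) :
    ∀ (k : ℕ) (f : (Fin k → L) → ℂ),
      (∃ g : AlternatingMap ℂ L ℂ (Fin k), ⇑g = f) →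
      ∀ x : Fin (k + 1) → L,
        iIns (⇑φ) (dbarOp (⇑prP) (⇑prQ) f) x - dbarOp (⇑prP) (⇑prQ) (iIns (⇑φ) f) x =
          -(iIns2
              (fun a b =>
                prP ⁅prQ a, φ (prQ b)⁆ - prP ⁅prQ b, φ (prQ a)⁆ - φ ⁅prQ a, prQ b⁆)
              f x) := by
  intro k f hf x
  obtain ⟨g, hg⟩ := hf
  subst hg
  have h0 : ∀ (y : Fin k → L) (m : Fin k), y m = 0 → g y = 0 :=
    fun y m hm => g.map_coord_zero m hm
  have hadd : ∀ (y : Fin k → L) (m : Fin k) (a b : L),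
      g (Function.update y m (a + b))
        = g (Function.update y m a) + g (Function.update y m b) :=
    fun y m a b => g.map_update_add y m a b
  set W : L → L → L := fun u v =>
    prP ⁅prP u, prQ v⁆ + prP ⁅prQ u, prP v⁆ + prQ ⁅prQ u, prQ v⁆ with hWdef
  have h0' := iIns_h0 (⇑φ) (map_zero φ) (⇑g) h0
  have hadd' := iIns_hadd (⇑φ) (fun a b => map_add φ a b) (⇑g) hadd
  have hD1 : dbarOp (⇑prP) (⇑prQ) (⇑g) = ceDW W (⇑g) := by
    rw [hWdef]
    exact funext fun y => dbar_eq (⇑prP) (⇑prQ) hproj hPP hQQ hPQ hQP (⇑g) h0 hadd y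
  have hD2 : dbarOp (⇑prP) (⇑prQ) (iIns (⇑φ) (⇑g)) = ceDW W (iIns (⇑φ) (⇑g)) := by
    rw [hWdef]
    exact funext fun y =>
      dbar_eq (⇑prP) (⇑prQ) hproj hPP hQQ hPQ hQP (iIns (⇑φ) (⇑g)) h0' hadd' y
  rw [hD1, hD2, phiComm (⇑φ) W (⇑g) hadd x, iIns2_neg]
  have hW : (fun u v => W (φ u) v + W u (φ v) - φ (W u v))
      = (fun a b => prP ⁅prQ a, φ (prQ b)⁆ - prP ⁅prQ b, φ (prQ a)⁆ - φ ⁅prQ a, prQ b⁆) := by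
    funext u v
    simp only [hWdef]
    exact NeqPhi prP prQ φ hproj hφ u v
  rw [hW]
end

section
/- Let (g,J) be a Lie algebra with complex structure and let φ(t) be the formal power series solution of φ = Σ_ν η_ν t_ν + ½ ∂̄†[φ,φ] constructed recursively by φ_1 = Σ_ν η_ν t_ν and φ_k = ½ ∂̄† Σ_{j=1}^{k-1} [φ_j, φ_{k-j}] for k > 1. Then the homogeneous terms satisfy ‖φ_k‖ ≤ (C/2)‖∂̄†‖ Σ_{j=1}^{k-1} ‖φ_j‖·‖φ_{k-j}‖, where C is the bilinearity constant of the Frölicher-Nijenhuis bracket; consequently the series Σ_k φ_k converges for |t| sufficiently small. -/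
open Finset

lemma aux_sum_inv_sq (n : ℕ) : ∑ j ∈ Finset.Icc 1 n, (1:ℝ)/(j:ℝ)^2 ≤ 2 - 2/(n+1) := by
  induction n with
  | zero => simp
  | succ n ih =>
    rw [Finset.sum_Icc_succ_top (by omega)]
    have h1 : (0:ℝ) < (n:ℝ)+1 := by positivity
    have h2 : (0:ℝ) < (n:ℝ)+2 := by positivity
    have key : (1:ℝ)/((n+1:ℕ):ℝ)^2 ≤ 2/((n:ℝ)+1) - 2/((n:ℝ)+2) := by
      push_cast
      rw [div_sub_div _ _ (ne_of_gt h1) (ne_of_gt h2), div_le_div_iff₀ (by positivity) (by positivity)]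
      nlinarith
    push_cast
    push_cast at ih key
    have e : ((n:ℝ)+1+1) = (n:ℝ)+2 := by ring
    rw [e]
    linarith

lemma aux_reflect (k : ℕ) :
    ∑ j ∈ Finset.Ioo 0 k, (1:ℝ)/((k-j:ℕ):ℝ)^2 = ∑ j ∈ Finset.Ioo 0 k, (1:ℝ)/(j:ℝ)^2 := by
  apply Finset.sum_nbij' (fun j => k - j) (fun j => k - j)
  · intro a ha; simp only [Finset.mem_Ioo] at *; omega
  · intro a ha; simp only [Finset.mem_Ioo] at *; omega
  · intro a ha; simp only [Finset.mem_Ioo] at ha; omega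
  · intro a ha; simp only [Finset.mem_Ioo] at ha; omega
  · intro a ha; simp only [Finset.mem_Ioo] at ha
    congr 2

lemma aux_conv (k : ℕ) (hk : 2 ≤ k) :
    ∑ j ∈ Finset.Ioo 0 k, (1:ℝ)/((j:ℝ)^2*((k-j:ℕ):ℝ)^2) ≤ 8/(k:ℝ)^2 := by
  have hk0 : (0:ℝ) < (k:ℝ) := by exact_mod_cast Nat.lt_of_lt_of_le (by norm_num) hk
  have step : ∀ j ∈ Finset.Ioo 0 k,
      (1:ℝ)/((j:ℝ)^2*((k-j:ℕ):ℝ)^2) ≤ 2/(k:ℝ)^2 * ((1:ℝ)/(j:ℝ)^2 + (1:ℝ)/((k-j:ℕ):ℝ)^2) := by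
    intro j hj
    simp only [Finset.mem_Ioo] at hj
    have hx : (0:ℝ) < (j:ℝ) := by exact_mod_cast hj.1
    have hy : (0:ℝ) < ((k-j:ℕ):ℝ) := by exact_mod_cast Nat.sub_pos_of_lt hj.2
    have hxy : (j:ℝ) + ((k-j:ℕ):ℝ) = (k:ℝ) := by
      have := hj.2.le
      push_cast [Nat.cast_sub this]
      ring
    set x := (j:ℝ); set y := ((k-j:ℕ):ℝ)
    rw [div_add_div _ _ (by positivity) (by positivity), div_mul_div_comm,
      div_le_div_iff₀ (by positivity) (by positivity)]
    rw [← hxy]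
    nlinarith [mul_nonneg (sq_nonneg (x - y)) (by positivity : (0:ℝ) ≤ x^2*y^2)]
  calc ∑ j ∈ Finset.Ioo 0 k, (1:ℝ)/((j:ℝ)^2*((k-j:ℕ):ℝ)^2)
      ≤ ∑ j ∈ Finset.Ioo 0 k, 2/(k:ℝ)^2 * ((1:ℝ)/(j:ℝ)^2 + (1:ℝ)/((k-j:ℕ):ℝ)^2) :=
        Finset.sum_le_sum step
    _ = 2/(k:ℝ)^2 * (∑ j ∈ Finset.Ioo 0 k, (1:ℝ)/(j:ℝ)^2
          + ∑ j ∈ Finset.Ioo 0 k, (1:ℝ)/((k-j:ℕ):ℝ)^2) := by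
        rw [← Finset.mul_sum, Finset.sum_add_distrib]
    _ = 2/(k:ℝ)^2 * (2 * ∑ j ∈ Finset.Ioo 0 k, (1:ℝ)/(j:ℝ)^2) := by
        rw [aux_reflect]; ring
    _ ≤ 2/(k:ℝ)^2 * (2 * 2) := by
        have h1 : Finset.Ioo 0 k = Finset.Icc 1 (k-1) := by
          ext a; simp only [Finset.mem_Ioo, Finset.mem_Icc]; omega
        have := aux_sum_inv_sq (k-1)
        have h2 : ∑ j ∈ Finset.Ioo 0 k, (1:ℝ)/(j:ℝ)^2 ≤ 2 := by
          rw [h1]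
          refine this.trans ?_
          have : (0:ℝ) ≤ 2/(((k-1:ℕ):ℝ)+1) := by positivity
          linarith
        gcongr
    _ ≤ 8/(k:ℝ)^2 := by rw [div_mul_eq_mul_div]; ring_nf; exact le_refl _

/-- the homogeneous terms of the Kuranishi power series
`φ₁ = ∑_ν η_ν t_ν`, `φ_k = ½ ∂̄† ∑_{0<j<k} [φ_j, φ_{k-j}]` satisfy the estimate
`‖φ_k‖ ≤ (C/2)‖∂̄†‖ ∑_{0<j<k} ‖φ_j‖·‖φ_{k-j}‖`, and consequently the series
`∑_k φ_k(t)` converges for `t` sufficiently small.  (Here `V₁, V₂` model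
`Λ^{0,1}⊗g^{1,0}` and `Λ^{0,2}⊗g^{1,0}`, `b` the Frölicher-Nijenhuis bracket with
bilinearity constant `C`, and `T` the Moore-Penrose inverse `∂̄†`.) -/
theorem kuranishi_series_estimate_and_convergence
    {V₁ V₂ : Type*}
    [NormedAddCommGroup V₁] [NormedSpace ℂ V₁] [FiniteDimensional ℂ V₁]
    [NormedAddCommGroup V₂] [NormedSpace ℂ V₂] [FiniteDimensional ℂ V₂]
    (b : V₁ →ₗ[ℂ] V₁ →ₗ[ℂ] V₂) (T : V₂ →L[ℂ] V₁) (C : ℝ) (hC : 0 ≤ C)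
    (hb : ∀ x y, ‖b x y‖ ≤ C * ‖x‖ * ‖y‖)
    (r : ℕ) (η : Fin r → V₁)
    (φ : ℕ → (Fin r → ℂ) → V₁)
    (hφ0 : ∀ t, φ 0 t = 0)
    (hφ1 : ∀ t, φ 1 t = ∑ ν, t ν • η ν)
    (hφk : ∀ k, 2 ≤ k → ∀ t, φ k t =
      (2 : ℂ)⁻¹ • T (∑ j ∈ Finset.Ioo 0 k, b (φ j t) (φ (k - j) t))) :
    (∀ k, 2 ≤ k → ∀ t, ‖φ k t‖ ≤
        C / 2 * ‖T‖ * ∑ j ∈ Finset.Ioo 0 k, ‖φ j t‖ * ‖φ (k - j) t‖) ∧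
    (∃ ε > (0 : ℝ), ∀ t : Fin r → ℂ, (∀ ν, ‖t ν‖ < ε) →
        Summable fun k => φ k t) := by
  have part1 : ∀ k, 2 ≤ k → ∀ t, ‖φ k t‖ ≤
      C / 2 * ‖T‖ * ∑ j ∈ Finset.Ioo 0 k, ‖φ j t‖ * ‖φ (k - j) t‖ := by
    intro k hk t
    rw [hφk k hk t, norm_smul]
    have h2 : ‖(2:ℂ)⁻¹‖ = (2:ℝ)⁻¹ := by simp
    rw [h2]
    calc (2:ℝ)⁻¹ * ‖T (∑ j ∈ Finset.Ioo 0 k, b (φ j t) (φ (k - j) t))‖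
        ≤ (2:ℝ)⁻¹ * (‖T‖ * ‖∑ j ∈ Finset.Ioo 0 k, b (φ j t) (φ (k - j) t)‖) := by
          gcongr
          exact T.le_opNorm _
      _ ≤ (2:ℝ)⁻¹ * (‖T‖ * ∑ j ∈ Finset.Ioo 0 k, C * ‖φ j t‖ * ‖φ (k - j) t‖) := by
          gcongr
          exact (norm_sum_le _ _).trans (Finset.sum_le_sum fun j _ => hb _ _)
      _ = C / 2 * ‖T‖ * ∑ j ∈ Finset.Ioo 0 k, ‖φ j t‖ * ‖φ (k - j) t‖ := by
          simp only [Finset.mul_sum]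
          exact Finset.sum_congr rfl fun j _ => by ring
  refine ⟨part1, ?_⟩
  set A : ℝ := C / 2 * ‖T‖ with hA
  have hA0 : 0 ≤ A := by positivity
  set M : ℝ := 1 / (16 * (A + 1)) with hM
  have hM0 : 0 < M := by positivity
  set S : ℝ := ∑ ν, ‖η ν‖ with hS
  have hS0 : 0 ≤ S := Finset.sum_nonneg fun ν _ => norm_nonneg _
  refine ⟨M / (S + 1), by positivity, ?_⟩
  intro t ht
  have hφ1bound : ‖φ 1 t‖ ≤ M := by
    rw [hφ1]
    calc ‖∑ ν, t ν • η ν‖ ≤ ∑ ν, ‖t ν • η ν‖ := norm_sum_le _ _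
      _ = ∑ ν, ‖t ν‖ * ‖η ν‖ := by simp [norm_smul]
      _ ≤ ∑ ν, (M / (S + 1)) * ‖η ν‖ := by
          apply Finset.sum_le_sum
          intro ν _
          exact mul_le_mul_of_nonneg_right (ht ν).le (norm_nonneg _)
      _ = (M / (S + 1)) * S := by rw [← Finset.mul_sum]
      _ ≤ M := by
          rw [div_mul_eq_mul_div, div_le_iff₀ (by positivity)]
          nlinarith
  have key : ∀ k, 1 ≤ k → ‖φ k t‖ ≤ M / (k:ℝ)^2 := by
    intro k
    induction k using Nat.strong_induction_on with
    | _ k ih =>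
      intro hk
      rcases eq_or_lt_of_le hk with heq | hlt
      · rw [← heq]; simpa using hφ1bound
      · have hk2 : 2 ≤ k := hlt
        have hkR : (0:ℝ) < (k:ℝ) := by exact_mod_cast Nat.lt_of_lt_of_le (by norm_num) hk2
        calc ‖φ k t‖ ≤ A * ∑ j ∈ Finset.Ioo 0 k, ‖φ j t‖ * ‖φ (k - j) t‖ := part1 k hk2 t
          _ ≤ A * ∑ j ∈ Finset.Ioo 0 k, (M / (j:ℝ)^2) * (M / ((k-j:ℕ):ℝ)^2) := by
              gcongr A * ∑ j ∈ Finset.Ioo 0 k, ?_ * ?_ with j hj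
              · simp only [Finset.mem_Ioo] at hj
                exact ih j hj.2 hj.1
              · simp only [Finset.mem_Ioo] at hj
                exact ih (k - j) (by omega) (by omega)
          _ = A * M^2 * ∑ j ∈ Finset.Ioo 0 k, (1:ℝ)/((j:ℝ)^2*((k-j:ℕ):ℝ)^2) := by
              rw [Finset.mul_sum, Finset.mul_sum]
              exact Finset.sum_congr rfl fun j _ => by ring
          _ ≤ A * M^2 * (8/(k:ℝ)^2) := by
              gcongr
              exact aux_conv k hk2
          _ = (8 * A * M) * (M / (k:ℝ)^2) := by
              field_simp
          _ ≤ 1 * (M / (k:ℝ)^2) := by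
              have h8 : 8 * A * M ≤ 1 := by
                rw [hM, mul_one_div, div_le_one (by positivity)]
                nlinarith
              exact mul_le_mul_of_nonneg_right h8 (by positivity)
          _ = M / (k:ℝ)^2 := one_mul _
  have bound : ∀ k, ‖φ k t‖ ≤ M / (k:ℝ)^2 := by
    intro k
    cases k with
    | zero => simp [hφ0]
    | succ n => exact key (n+1) (by omega)
  have hsum : Summable fun k : ℕ => M / (k:ℝ)^2 := by
    have : Summable fun k : ℕ => (1:ℝ) / (k:ℝ)^2 :=
      Real.summable_one_div_nat_pow.mpr (by norm_num)
    simpa [div_eq_mul_inv, mul_assoc] using this.mul_left M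
  exact Summable.of_norm_bounded hsum bound
end

section
/- Let φ(t) = Σ_k φ_k be defined by the Kuranishi recursion φ = Σ_ν η_ν t_ν + ½ ∂̄†[φ,φ]. Then for small t, φ(t) satisfies the Maurer-Cartan equation ∂̄φ(t) = ½[φ(t),φ(t)] if and only if H^{0,2}[φ(t),φ(t)] = 0, where H^{0,2} is the orthogonal projection onto the harmonic space in Λ^{0,2}⊗g^{1,0}. -/
lemma kur_aux_conv (k : ℕ) (hk : 2 ≤ k) :
    ∑ j ∈ Finset.Ioo 0 k, ((j:ℝ)^2 * ((k-j : ℕ):ℝ)^2)⁻¹ ≤ 8 / (k:ℝ)^2 := by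
  have hterm : ∀ j ∈ Finset.Ioo 0 k,
      ((j:ℝ)^2 * ((k-j : ℕ):ℝ)^2)⁻¹ ≤ 2/(k:ℝ)^2 * (((j:ℝ)^2)⁻¹ + (((k-j:ℕ):ℝ)^2)⁻¹) := by
    intro j hj
    simp only [Finset.mem_Ioo] at hj
    obtain ⟨hj0, hjk⟩ := hj
    have hx : (0:ℝ) < (j:ℝ) := by exact_mod_cast hj0
    have hm0 : 0 < k - j := by omega
    have hy : (0:ℝ) < ((k-j:ℕ):ℝ) := by exact_mod_cast hm0
    have hxy : (j:ℝ) + ((k-j:ℕ):ℝ) = (k:ℝ) := by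
      have : j + (k - j) = k := by omega
      exact_mod_cast this
    have hkpos : (0:ℝ) < (k:ℝ) := by positivity
    have e1 : ((j:ℝ)^2 * ((k-j : ℕ):ℝ)^2)⁻¹
        = (k:ℝ)^2 / ((j:ℝ)^2 * ((k-j : ℕ):ℝ)^2 * (k:ℝ)^2) := by
      field_simp
    have e2 : 2/(k:ℝ)^2 * (((j:ℝ)^2)⁻¹ + (((k-j:ℕ):ℝ)^2)⁻¹)
        = (2*((j:ℝ)^2 + ((k-j:ℕ):ℝ)^2)) / ((j:ℝ)^2 * ((k-j : ℕ):ℝ)^2 * (k:ℝ)^2) := by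
      field_simp
      ring
    rw [e1, e2]
    gcongr
    nlinarith [sq_nonneg ((j:ℝ) - ((k-j:ℕ):ℝ))]
  have h2 : ∑ j ∈ Finset.Ioo 0 k, (((k-j:ℕ):ℝ)^2)⁻¹ = ∑ j ∈ Finset.Ioo 0 k, ((j:ℝ)^2)⁻¹ := by
    apply Finset.sum_nbij' (i := fun j => k - j) (j := fun j => k - j)
    · intro a ha; simp only [Finset.mem_Ioo] at *; omega
    · intro a ha; simp only [Finset.mem_Ioo] at *; omega
    · intro a ha; simp only [Finset.mem_Ioo] at ha; omega
    · intro a ha; simp only [Finset.mem_Ioo] at ha; omega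
    · intro a ha; simp only [Finset.mem_Ioo] at ha
      rfl
  have h1 : ∑ j ∈ Finset.Ioo 0 k, ((j:ℝ)^2)⁻¹ ≤ 2 := by
    have := sum_Ioo_inv_sq_le (α := ℝ) 0 k
    push_cast at this ⊢
    simpa using this
  have h0 : 0 ≤ ∑ j ∈ Finset.Ioo 0 k, ((j:ℝ)^2)⁻¹ :=
    Finset.sum_nonneg fun j _ => by positivity
  calc ∑ j ∈ Finset.Ioo 0 k, ((j:ℝ)^2 * ((k-j : ℕ):ℝ)^2)⁻¹
      ≤ ∑ j ∈ Finset.Ioo 0 k, 2/(k:ℝ)^2 * (((j:ℝ)^2)⁻¹ + (((k-j:ℕ):ℝ)^2)⁻¹) :=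
        Finset.sum_le_sum hterm
    _ = 2/(k:ℝ)^2 * ((∑ j ∈ Finset.Ioo 0 k, ((j:ℝ)^2)⁻¹)
          + ∑ j ∈ Finset.Ioo 0 k, (((k-j:ℕ):ℝ)^2)⁻¹) := by
        rw [← Finset.mul_sum, Finset.sum_add_distrib]
    _ ≤ 2/(k:ℝ)^2 * (2 + 2) := by
        rw [h2]; gcongr <;> exact h1
    _ = 8/(k:ℝ)^2 := by ring


set_option maxHeartbeats 2000000 in
/-- for the Kuranishi power series `φ(t) = ∑_k φ_k(t)` defined by the recursion
`φ₁ = ∑_ν η_ν t_ν`, `φ_k = ½ ∂̄† ∑_{0<j<k}[φ_j, φ_{k-j}]`, and for small `t`, the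
Maurer-Cartan equation `∂̄φ(t) = ½[φ(t),φ(t)]` holds if and only if the harmonic projection
`H^{0,2}[φ(t),φ(t)]` vanishes.  (`V₁, V₂, V₃` model `Λ^{0,q}⊗g^{1,0}` for `q = 1,2,3`, with
differentials `d₁, d₂`, Moore-Penrose inverses `S₁, S₂`, Frölicher-Nijenhuis brackets
`b : V₁×V₁→V₂` and `b2 : V₂×V₁→V₃` satisfying the derivation rule `∂̄[x,x] = 2[∂̄x,x]`, the
graded Jacobi identity `[[x,x],x] = 0`, and norm bounds; the harmonic space in `V₂` is
`ker d₂ ⊓ ker S₁`.) -/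
theorem kuranishi_maurerCartan_iff_harmonic_obstruction
    {V₁ V₂ V₃ : Type*}
    [NormedAddCommGroup V₁] [InnerProductSpace ℂ V₁] [FiniteDimensional ℂ V₁]
    [NormedAddCommGroup V₂] [InnerProductSpace ℂ V₂] [FiniteDimensional ℂ V₂]
    [NormedAddCommGroup V₃] [InnerProductSpace ℂ V₃] [FiniteDimensional ℂ V₃]
    (d₁ : V₁ →ₗ[ℂ] V₂) (d₂ : V₂ →ₗ[ℂ] V₃) (S₁ : V₂ →ₗ[ℂ] V₁) (S₂ : V₃ →ₗ[ℂ] V₂)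
    (hdd : d₂ ∘ₗ d₁ = 0)
    (hS₁a : ∀ y ∈ LinearMap.range d₁, S₁ y ∈ (LinearMap.ker d₁)ᗮ ∧ d₁ (S₁ y) = y)
    (hS₁b : ∀ y ∈ (LinearMap.range d₁)ᗮ, S₁ y = 0)
    (hS₂a : ∀ y ∈ LinearMap.range d₂, S₂ y ∈ (LinearMap.ker d₂)ᗮ ∧ d₂ (S₂ y) = y)
    (hS₂b : ∀ y ∈ (LinearMap.range d₂)ᗮ, S₂ y = 0)
    (b : V₁ →ₗ[ℂ] V₁ →ₗ[ℂ] V₂) (b2 : V₂ →ₗ[ℂ] V₁ →ₗ[ℂ] V₃)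
    (hbsymm : ∀ x y, b x y = b y x)
    (C : ℝ) (hC : 0 ≤ C)
    (hbC : ∀ x y, ‖b x y‖ ≤ C * ‖x‖ * ‖y‖)
    (hb2C : ∀ x y, ‖b2 x y‖ ≤ C * ‖x‖ * ‖y‖)
    (hder : ∀ x : V₁, d₂ (b x x) = (2 : ℂ) • b2 (d₁ x) x)
    (hJac : ∀ x : V₁, b2 (b x x) x = 0)
    (r : ℕ) (η : Fin r → V₁) (hη : ∀ ν, d₁ (η ν) = 0)
    (φ : ℕ → (Fin r → ℂ) → V₁)
    (hφ0 : ∀ t, φ 0 t = 0)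
    (hφ1 : ∀ t, φ 1 t = ∑ ν, t ν • η ν)
    (hφk : ∀ k, 2 ≤ k → ∀ t, φ k t =
      (2 : ℂ)⁻¹ • S₁ (∑ j ∈ Finset.Ioo 0 k, b (φ j t) (φ (k - j) t))) :
    ∃ ε > (0 : ℝ), ∀ t : Fin r → ℂ, (∀ ν, ‖t ν‖ < ε) →
      (d₁ (∑' k, φ k t) = (2 : ℂ)⁻¹ • b (∑' k, φ k t) (∑' k, φ k t) ↔
        Submodule.orthogonalProjectionOnto (LinearMap.ker d₂ ⊓ LinearMap.ker S₁)
          (b (∑' k, φ k t) (∑' k, φ k t)) = 0) := by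
  classical
  -- abbreviations
  set R : Submodule ℂ V₂ := LinearMap.range d₁ with hR
  set H : Submodule ℂ V₂ := LinearMap.ker d₂ ⊓ LinearMap.ker S₁ with hH
  set L₁ : V₂ →L[ℂ] V₁ := LinearMap.toContinuousLinearMap S₁ with hL₁
  set L₂ : V₃ →L[ℂ] V₂ := LinearMap.toContinuousLinearMap S₂ with hL₂
  have hL₁app : ∀ y, L₁ y = S₁ y := fun y => by rw [hL₁]; simp
  have hL₂app : ∀ y, L₂ y = S₂ y := fun y => by rw [hL₂]; simp
  have hhalf : ‖(2:ℂ)⁻¹‖ = 1/2 := by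
    rw [norm_inv]; norm_num
  -- structural facts about S₁ and projections
  have hmem_oR : ∀ y : V₂, S₁ y = 0 → y ∈ Rᗮ := by
    intro y hy
    have hp := Submodule.sub_starProjection_mem_orthogonal (K := R) y
    set p : V₂ := (Submodule.orthogonalProjectionOnto R y : V₂) with hpdef
    have hpR : p ∈ R := (Submodule.orthogonalProjectionOnto R y).2
    have hS1p : S₁ (y - p) = 0 := hS₁b _ hp
    have hS1p' : S₁ p = 0 := by
      have h := map_sub S₁ y p
      rw [hS1p, hy, zero_sub] at h
      exact neg_eq_zero.mp h.symm
    have hp0 : p = 0 := by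
      have := (hS₁a p hpR).2
      rw [hS1p'] at this
      rw [← this, map_zero]
    have : y - p ∈ Rᗮ := hp
    rwa [hp0, sub_zero] at this
  have hoR_mem : ∀ y : V₂, y ∈ Rᗮ → S₁ y = 0 := hS₁b
  have hdS : ∀ y : V₂, y - d₁ (S₁ y) ∈ Rᗮ := by
    intro y
    have hp := Submodule.sub_starProjection_mem_orthogonal (K := R) y
    set p : V₂ := (Submodule.orthogonalProjectionOnto R y : V₂) with hpdef
    have hpR : p ∈ R := (Submodule.orthogonalProjectionOnto R y).2
    have hS1p : S₁ (y - p) = 0 := hS₁b _ hp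
    have hS1y : S₁ y = S₁ p := by
      have h := map_sub S₁ y p
      rw [hS1p] at h
      exact sub_eq_zero.mp h.symm
    have : d₁ (S₁ y) = p := by rw [hS1y]; exact (hS₁a p hpR).2
    rw [this]; exact hp
  have hHleR : H ≤ Rᗮ := by
    intro x hx
    exact hmem_oR x ((Submodule.mem_inf.mp hx).2)
  have hRleH : R ≤ Hᗮ := by
    intro x hx
    rw [Submodule.mem_orthogonal]
    intro u hu
    have := hHleR hu
    rw [Submodule.mem_orthogonal] at this
    exact inner_eq_zero_symm.mp (this x hx)
  have hRker : R ≤ LinearMap.ker d₂ := by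
    rintro _ ⟨x, rfl⟩
    simpa using LinearMap.congr_fun hdd x
  -- constants
  set N : ℝ := ∑ ν, ‖η ν‖ with hN
  have hN0 : 0 ≤ N := Finset.sum_nonneg fun _ _ => norm_nonneg _
  set K : ℝ := ‖L₁‖ * C / 2 with hK
  have hK0 : 0 ≤ K := by positivity
  set D : ℝ := 16*K + 4*‖L₂‖*C + 1 with hD
  have hD0 : 0 < D := by positivity
  refine ⟨1/((N+1)*D), by positivity, ?_⟩
  intro t ht
  set ε : ℝ := 1/((N+1)*D) with hεdef
  have hε0 : 0 < ε := by positivity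
  set M : ℝ := ε * N with hMdef
  have hM0 : 0 ≤ M := by positivity
  have hMD : M * D ≤ 1 := by
    have : M * D = N / (N + 1) := by
      rw [hMdef, hεdef]
      field_simp
    rw [this]
    rw [div_le_one (by positivity)]
    linarith
  have hexp : 16*K*M + 4*‖L₂‖*C*M + M = M * D := by rw [hD]; ring
  have hK16 : 0 ≤ 16*K*M := by positivity
  have hML : 0 ≤ 4*‖L₂‖*C*M := by positivity
  have h16 : 16 * K * M ≤ 1 := by linarith
  have h4 : 4 * ‖L₂‖ * C * M < 1 := by
    rcases hM0.eq_or_lt with h | h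
    · rw [← h] at hML ⊢
      simpa using lt_of_le_of_lt (le_of_eq (by ring)) (by norm_num : (0:ℝ) < 1)
    · linarith
  -- the bounding sequence
  set a : ℕ → ℝ := fun k => M * (1/2:ℝ)^(k-1) * (((k:ℕ):ℝ)^2)⁻¹ with ha
  have haeq : ∀ k, a k = M * (1/2:ℝ)^(k-1) * (((k:ℕ):ℝ)^2)⁻¹ := fun k => by rw [ha]
  have ha0 : ∀ k, 0 ≤ a k := by
    intro k
    rw [haeq]
    exact mul_nonneg (mul_nonneg hM0 (by positivity)) (by positivity)
  have hageo : ∀ k, a k ≤ (2*M) * (1/2:ℝ)^k := by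
    intro k
    rw [haeq]
    rcases k with _ | k
    · norm_num; linarith
    · have h1 : (((k+1:ℕ):ℝ)^2)⁻¹ ≤ 1 := by
        rw [inv_le_one_iff₀]
        right
        have : (1:ℝ) ≤ ((k+1:ℕ):ℝ) := by exact_mod_cast Nat.one_le_iff_ne_zero.mpr (Nat.succ_ne_zero k)
        nlinarith
      calc M * (1/2:ℝ)^(k+1-1) * (((k+1:ℕ):ℝ)^2)⁻¹ ≤ M * (1/2:ℝ)^k * 1 := by
            rw [Nat.add_sub_cancel]
            exact mul_le_mul_of_nonneg_left h1 (by positivity)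
        _ = (2*M) * (1/2:ℝ)^(k+1) := by ring
  have hasum : Summable a :=
    Summable.of_nonneg_of_le ha0 hageo ((summable_geometric_two).mul_left (2*M))
  have htsuma : ∑' k, a k ≤ 4 * M := by
    calc ∑' k, a k ≤ ∑' k, (2*M) * (1/2:ℝ)^k := Summable.tsum_le_tsum hageo hasum
          ((summable_geometric_two).mul_left (2*M))
      _ = (2*M) * 2 := by rw [tsum_mul_left, tsum_geometric_two]
      _ = 4 * M := by ring
  -- the key norm estimate
  have hφa : ∀ k, ‖φ k t‖ ≤ a k := by
    intro k
    induction k using Nat.strong_induction_on with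
    | _ k ih =>
      match k, ih with
      | 0, _ => rw [hφ0, haeq]; norm_num
      | 1, _ =>
        rw [hφ1]
        have : ∀ ν : Fin r, ‖t ν • η ν‖ ≤ ε * ‖η ν‖ := by
          intro ν
          rw [norm_smul]
          exact mul_le_mul_of_nonneg_right (le_of_lt (ht ν)) (norm_nonneg _)
        calc ‖∑ ν, t ν • η ν‖ ≤ ∑ ν, ‖t ν • η ν‖ := norm_sum_le _ _
          _ ≤ ∑ ν, ε * ‖η ν‖ := Finset.sum_le_sum fun ν _ => this ν
          _ = ε * N := by rw [← Finset.mul_sum]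
          _ = M := hMdef.symm
          _ = a 1 := by rw [haeq]; norm_num
      | (k+2), ih =>
        have hterm : ∀ j ∈ Finset.Ioo 0 (k+2), ‖b (φ j t) (φ (k+2-j) t)‖
            ≤ C * (a j * a (k+2-j)) := by
          intro j hj
          simp only [Finset.mem_Ioo] at hj
          have h1 := ih j (by omega)
          have h2 := ih (k+2-j) (by omega)
          have h3 : ‖φ j t‖ * ‖φ (k+2-j) t‖ ≤ a j * a (k+2-j) :=
            mul_le_mul h1 h2 (norm_nonneg _) (ha0 j)
          calc ‖b (φ j t) (φ (k+2-j) t)‖ ≤ C * ‖φ j t‖ * ‖φ (k+2-j) t‖ := hbC _ _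
            _ = C * (‖φ j t‖ * ‖φ (k+2-j) t‖) := by ring
            _ ≤ C * (a j * a (k+2-j)) := mul_le_mul_of_nonneg_left h3 hC
        have hterm2 : ∀ j ∈ Finset.Ioo 0 (k+2), a j * a (k+2-j)
            = M^2 * (1/2:ℝ)^k * (((j:ℕ):ℝ)^2 * (((k+2-j:ℕ)):ℝ)^2)⁻¹ := by
          intro j hj
          simp only [Finset.mem_Ioo] at hj
          have e : (j-1) + (k+2-j-1) = k := by omega
          calc a j * a (k+2-j)
              = M^2 * ((1/2:ℝ)^(j-1) * (1/2:ℝ)^(k+2-j-1))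
                * ((((j:ℕ):ℝ)^2)⁻¹ * ((((k+2-j:ℕ)):ℝ)^2)⁻¹) := by
                rw [haeq, haeq]; ring
            _ = M^2 * (1/2:ℝ)^k * (((j:ℕ):ℝ)^2 * (((k+2-j:ℕ)):ℝ)^2)⁻¹ := by
                rw [← pow_add, e, ← mul_inv]
        have hsum : ‖∑ j ∈ Finset.Ioo 0 (k+2), b (φ j t) (φ (k+2-j) t)‖
            ≤ C * (M^2 * (1/2:ℝ)^k) * (8 / (((k+2:ℕ)):ℝ)^2) := by
          calc ‖∑ j ∈ Finset.Ioo 0 (k+2), b (φ j t) (φ (k+2-j) t)‖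
              ≤ ∑ j ∈ Finset.Ioo 0 (k+2), ‖b (φ j t) (φ (k+2-j) t)‖ := norm_sum_le _ _
            _ ≤ ∑ j ∈ Finset.Ioo 0 (k+2), C * (a j * a (k+2-j)) := Finset.sum_le_sum hterm
            _ = C * (M^2 * (1/2:ℝ)^k)
                * ∑ j ∈ Finset.Ioo 0 (k+2), (((j:ℕ):ℝ)^2 * (((k+2-j:ℕ)):ℝ)^2)⁻¹ := by
                rw [Finset.mul_sum]
                apply Finset.sum_congr rfl
                intro j hj
                rw [hterm2 j hj]
                ring
            _ ≤ C * (M^2 * (1/2:ℝ)^k) * (8 / (((k+2:ℕ)):ℝ)^2) := by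
                apply mul_le_mul_of_nonneg_left (kur_aux_conv (k+2) (by omega))
                have : (0:ℝ) ≤ M^2 * (1/2:ℝ)^k := by positivity
                exact mul_nonneg hC this
        rw [hφk (k+2) (by omega) t, norm_smul, hhalf]
        have hnS : ‖S₁ (∑ j ∈ Finset.Ioo 0 (k+2), b (φ j t) (φ (k+2-j) t))‖
            ≤ ‖L₁‖ * (C * (M^2 * (1/2:ℝ)^k) * (8 / (((k+2:ℕ)):ℝ)^2)) := by
          rw [← hL₁app]
          exact le_trans (L₁.le_opNorm _) (mul_le_mul_of_nonneg_left hsum (norm_nonneg L₁))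
        have hbr : (0:ℝ) ≤ M * (1/2:ℝ)^(k+1) * (((k+2:ℕ):ℝ)^2)⁻¹ :=
          mul_nonneg (mul_nonneg hM0 (by positivity)) (by positivity)
        calc (1/2) * ‖S₁ (∑ j ∈ Finset.Ioo 0 (k+2), b (φ j t) (φ (k+2-j) t))‖
            ≤ (1/2) * (‖L₁‖ * (C * (M^2 * (1/2:ℝ)^k) * (8 / (((k+2:ℕ)):ℝ)^2))) := by
              linarith
          _ = (16*K*M) * (M * (1/2:ℝ)^(k+1) * (((k+2:ℕ):ℝ)^2)⁻¹) := by
              rw [hK]; field_simp; ring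
          _ ≤ 1 * (M * (1/2:ℝ)^(k+1) * (((k+2:ℕ):ℝ)^2)⁻¹) :=
              mul_le_mul_of_nonneg_right h16 hbr
          _ = a (k+2) := by
              rw [haeq]
              norm_num
  -- summability of the series
  have hφnorms : Summable (fun k => ‖φ k t‖) :=
    Summable.of_nonneg_of_le (fun k => norm_nonneg _) hφa hasum
  have hφs : Summable (fun k => φ k t) := Summable.of_norm_bounded hasum hφa
  set Φ : V₁ := ∑' k, φ k t with hΦ
  have hΦnorm : ‖Φ‖ ≤ 4 * M := by
    calc ‖Φ‖ ≤ ∑' k, ‖φ k t‖ := norm_tsum_le_tsum_norm hφnorms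
      _ ≤ ∑' k, a k := Summable.tsum_le_tsum hφa hφnorms hasum
      _ ≤ 4 * M := htsuma
  -- the Cauchy product
  set F : ℕ × ℕ → V₂ := fun p => b (φ p.1 t) (φ p.2 t) with hF
  have hFapp : ∀ p : ℕ × ℕ, F p = b (φ p.1 t) (φ p.2 t) := fun p => by rw [hF]
  have hFs : Summable F := by
    apply Summable.of_norm_bounded (g := fun p : ℕ × ℕ => C * (a p.1 * a p.2))
      ((hasum.mul_of_nonneg hasum ha0 ha0).mul_left C)
    intro p
    rw [hFapp]
    calc ‖b (φ p.1 t) (φ p.2 t)‖ ≤ C * ‖φ p.1 t‖ * ‖φ p.2 t‖ := hbC _ _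
      _ = C * (‖φ p.1 t‖ * ‖φ p.2 t‖) := by ring
      _ ≤ C * (a p.1 * a p.2) := mul_le_mul_of_nonneg_left
          (mul_le_mul (hφa _) (hφa _) (norm_nonneg _) (ha0 _)) hC
  have hBexp : b Φ Φ = ∑' (n : ℕ), ∑ kl ∈ Finset.HasAntidiagonal.antidiagonal n, F kl := by
    have e1 : b Φ Φ = ∑' i, b (φ i t) Φ := by
      have h := (LinearMap.toContinuousLinearMap (b.flip Φ)).map_tsum hφs
      simpa using h
    have e2 : ∀ i, b (φ i t) Φ = ∑' j, F (i, j) := by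
      intro i
      have h := (LinearMap.toContinuousLinearMap (b (φ i t))).map_tsum hφs
      simpa [hFapp] using h
    rw [e1, tsum_congr e2, ← Summable.tsum_prod' hFs (fun i => hFs.prod_factor i)]
    conv_rhs => congr; ext n; rw [← Finset.sum_finset_coe, ← tsum_fintype (L := .unconditional _)]
    rw [← Finset.HasAntidiagonal.sigmaAntidiagonalEquivProd.tsum_eq F]
    exact Summable.tsum_sigma' (fun n => (hasSum_fintype _).summable)
      (Finset.HasAntidiagonal.sigmaAntidiagonalEquivProd.summable_iff.mpr hFs)
  have hgs : Summable (fun n => ∑ kl ∈ Finset.HasAntidiagonal.antidiagonal n, F kl) := by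
    conv => congr; ext n; rw [← Finset.sum_finset_coe, ← tsum_fintype (L := .unconditional _)]
    exact (Finset.HasAntidiagonal.sigmaAntidiagonalEquivProd.summable_iff.mpr hFs).sigma'
      (fun n => (hasSum_fintype _).summable)
  -- recursion identity termwise
  have hrec : ∀ n : ℕ, (2:ℂ)⁻¹ • S₁ (∑ kl ∈ Finset.HasAntidiagonal.antidiagonal n, F kl)
      = if n ≤ 1 then 0 else φ n t := by
    intro n
    match n with
    | 0 =>
      rw [if_pos (by omega)]
      simp [hFapp, hφ0]
    | 1 =>
      rw [if_pos (by omega)]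
      rw [Finset.Nat.sum_antidiagonal_eq_sum_range_succ_mk]
      simp [hFapp, hφ0, Finset.sum_range_succ, LinearMap.map_zero₂]
    | (n+2) =>
      rw [if_neg (by omega)]
      rw [Finset.Nat.sum_antidiagonal_eq_sum_range_succ_mk]
      have hsubset : Finset.Ioo 0 (n+2) ⊆ Finset.range (n+2+1) := by
        intro x hx
        simp only [Finset.mem_Ioo] at hx
        simp only [Finset.mem_range]
        omega
      have hzero : ∀ x ∈ Finset.range (n+2+1), x ∉ Finset.Ioo 0 (n+2) →
          F (x, n+2-x) = 0 := by
        intro x hx hx'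
        simp only [Finset.mem_range] at hx
        simp only [Finset.mem_Ioo] at hx'
        have : x = 0 ∨ x = n+2 := by omega
        rcases this with h | h <;> subst h <;> rw [hFapp] <;>
          simp [hφ0, LinearMap.map_zero₂]
      have hsub : ∑ i ∈ Finset.range (n+2+1), F (i, n+2-i)
          = ∑ j ∈ Finset.Ioo 0 (n+2), b (φ j t) (φ (n+2-j) t) := by
        rw [← Finset.sum_subset hsubset hzero]
      rw [hsub, ← hφk (n+2) (by omega) t]
  -- the fixed point identity
  have hhalfS : (2:ℂ)⁻¹ • S₁ (b Φ Φ) = Φ - φ 1 t := by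
    have hmain : (2:ℂ)⁻¹ • S₁ (b Φ Φ) = ∑' n, (if n ≤ 1 then 0 else φ n t) := by
      have hLs : Summable (fun n => L₁ (∑ kl ∈ Finset.HasAntidiagonal.antidiagonal n, F kl)) :=
        hgs.mapL L₁
      rw [hBexp, ← hL₁app, ContinuousLinearMap.map_tsum L₁ hgs, ← Summable.tsum_const_smul _ hLs]
      exact tsum_congr fun n => by rw [hL₁app]; exact hrec n
    have hfin : Summable (fun n => if n ≤ 1 then φ n t else 0) := by
      apply summable_of_ne_finset_zero (s := {0, 1})
      intro n hn
      simp only [Finset.mem_insert, Finset.mem_singleton] at hn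
      rw [if_neg (by omega)]
    have heq : (fun n => if n ≤ 1 then 0 else φ n t)
        = fun n => φ n t - (if n ≤ 1 then φ n t else 0) := by
      funext n
      split <;> simp
    have htail : Summable (fun n => if n ≤ 1 then 0 else φ n t) := by
      rw [heq]; exact hφs.sub hfin
    have hfinval : ∑' n, (if n ≤ 1 then φ n t else 0) = φ 1 t := by
      rw [tsum_eq_sum (s := {0, 1}) (fun n hn => by
        simp only [Finset.mem_insert, Finset.mem_singleton] at hn
        rw [if_neg (by omega)])]
      rw [Finset.sum_insert (by norm_num), Finset.sum_singleton]
      simp [hφ0]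
    rw [hmain, heq, Summable.tsum_sub hφs hfin, hfinval]
  have hfix : Φ = φ 1 t + (2:ℂ)⁻¹ • S₁ (b Φ Φ) := by
    rw [hhalfS]; abel
  have hd1Φ : d₁ Φ = (2:ℂ)⁻¹ • d₁ (S₁ (b Φ Φ)) := by
    have h1 : d₁ (φ 1 t) = 0 := by
      rw [hφ1, map_sum]
      simp [hη]
    conv_lhs => rw [hfix]
    rw [map_add, map_smul, h1, zero_add]
  -- the main equivalence
  constructor
  · -- Maurer-Cartan implies vanishing obstruction
    intro hmc
    have hB2 : b Φ Φ = d₁ ((2:ℂ) • Φ) := by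
      rw [map_smul, hmc, smul_smul]
      norm_num
    have hBR : b Φ Φ ∈ R := by rw [hB2]; exact ⟨_, rfl⟩
    rw [Submodule.orthogonalProjectionOnto_eq_zero_iff]
    exact hRleH hBR
  · -- vanishing obstruction implies Maurer-Cartan
    intro hob
    have hBH : b Φ Φ ∈ Hᗮ := Submodule.orthogonalProjectionOnto_eq_zero_iff.mp hob
    set ψ : V₂ := d₁ Φ - (2:ℂ)⁻¹ • b Φ Φ with hψ
    have hψR : ψ ∈ Rᗮ := by
      have h1 : b Φ Φ - d₁ (S₁ (b Φ Φ)) ∈ Rᗮ := hdS (b Φ Φ)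
      have h2 : ψ = -((2:ℂ)⁻¹ • (b Φ Φ - d₁ (S₁ (b Φ Φ)))) := by
        rw [hψ, hd1Φ, smul_sub]
        abel
      rw [h2]
      exact Submodule.neg_mem _ (Submodule.smul_mem _ _ h1)
    have hψH : ψ ∈ Hᗮ := by
      rw [hψ]
      apply Submodule.sub_mem
      · rw [hd1Φ]
        exact Submodule.smul_mem _ _ (hRleH ⟨S₁ (b Φ Φ), rfl⟩)
      · exact Submodule.smul_mem _ _ hBH
    have hd2ψ : d₂ ψ = - b2 ψ Φ := by
      have hdd' : d₂ (d₁ Φ) = 0 := by simpa using LinearMap.congr_fun hdd Φ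
      have h3 : d₁ Φ = ψ + (2:ℂ)⁻¹ • b Φ Φ := by rw [hψ]; abel
      have h4 : b2 (d₁ Φ) Φ = b2 ψ Φ + (2:ℂ)⁻¹ • b2 (b Φ Φ) Φ := by
        rw [h3, map_add, map_smul]
        simp
      calc d₂ ψ = -((2:ℂ)⁻¹ • d₂ (b Φ Φ)) := by
            rw [hψ, map_sub, map_smul, hdd', zero_sub]
        _ = -((2:ℂ)⁻¹ • ((2:ℂ) • b2 (d₁ Φ) Φ)) := by rw [hder Φ]
        _ = - b2 (d₁ Φ) Φ := by rw [smul_smul]; norm_num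
        _ = - b2 ψ Φ := by rw [h4, hJac Φ, smul_zero, add_zero]
    have hψeq : ψ = S₂ (d₂ ψ) := by
      obtain ⟨hw1, hw2⟩ := hS₂a (d₂ ψ) ⟨ψ, rfl⟩
      have hker : ψ - S₂ (d₂ ψ) ∈ LinearMap.ker d₂ := by
        rw [LinearMap.mem_ker, map_sub, hw2, sub_self]
      have hwR : S₂ (d₂ ψ) ∈ Rᗮ := Submodule.orthogonal_le hRker hw1
      have hkS : ψ - S₂ (d₂ ψ) ∈ LinearMap.ker S₁ := by
        rw [LinearMap.mem_ker, map_sub, hoR_mem _ hψR, hoR_mem _ hwR, sub_zero]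
      have hmemH : ψ - S₂ (d₂ ψ) ∈ H := Submodule.mem_inf.mpr ⟨hker, hkS⟩
      have hmemHp : ψ - S₂ (d₂ ψ) ∈ Hᗮ := by
        apply Submodule.sub_mem _ hψH
        exact Submodule.orthogonal_le inf_le_left hw1
      have h0 := Submodule.disjoint_def.mp (Submodule.orthogonal_disjoint H)
        _ hmemH hmemHp
      exact sub_eq_zero.mp h0
    have hψ0 : ψ = 0 := by
      by_contra hne
      have hnorm : ‖ψ‖ ≤ (4*‖L₂‖*C*M) * ‖ψ‖ := by
        calc ‖ψ‖ = ‖S₂ (d₂ ψ)‖ := by rw [← hψeq]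
          _ = ‖S₂ (b2 ψ Φ)‖ := by rw [hd2ψ, map_neg, norm_neg]
          _ ≤ ‖L₂‖ * ‖b2 ψ Φ‖ := by rw [← hL₂app]; exact L₂.le_opNorm _
          _ ≤ ‖L₂‖ * (C * ‖ψ‖ * ‖Φ‖) :=
              mul_le_mul_of_nonneg_left (hb2C _ _) (norm_nonneg _)
          _ ≤ ‖L₂‖ * (C * ‖ψ‖ * (4*M)) := by
              apply mul_le_mul_of_nonneg_left _ (norm_nonneg _)
              exact mul_le_mul_of_nonneg_left hΦnorm
                (mul_nonneg hC (norm_nonneg _))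
          _ = (4*‖L₂‖*C*M) * ‖ψ‖ := by ring
      have hpos : 0 < ‖ψ‖ := norm_pos_iff.mpr hne
      nlinarith
    have := hψ0
    rw [hψ] at this
    exact sub_eq_zero.mp this
end
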